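/- arXiv:2502.01805 — 12 statements merged into one kernel-verified Lean document; each statement's English description precedes it below -/
import Mathlib

section
/- Let (Γ,φ) be an incidence gain graph with gain group G acting on a nonempty set Λ, and let f : V → G be a switching function. Then the pair of maps (g₁,g₂), where g₁ fixes each point x_p and sends y_{b,λ} to y_{b,f(b)·λ}, and g₂ sends z_{p,λ} to z_{p,f(p)·λ}, is an isomorphism of incidence structures from 𝔐(Γ,φ) to 𝔐(Γ, ᶠφ). -/
open Classical

/-- An incidence structure: points `P`, lines `B`, incidence relation `inc`. -/
structure IncStruct (P B : Type*) where
  inc : P → B → Prop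

namespace IncStruct

variable {P B : Type*}

/-- Adjacency in the incidence graph on `P ⊕ B`. -/
def adj (S : IncStruct P B) : P ⊕ B → P ⊕ B → Prop
  | Sum.inl p, Sum.inr b => S.inc p b
  | Sum.inr b, Sum.inl p => S.inc p b
  | _, _ => False

/-- `c` is a `k`-chain from `u` to `v`: a list of `k+1` elements, starting at `u`,
ending at `v`, with consecutive elements incident. -/
def IsNChain (S : IncStruct P B) (k : ℕ) (u v : P ⊕ B) (c : List (P ⊕ B)) : Prop :=
  c.length = k + 1 ∧ c.head? = some u ∧ c.getLast? = some v ∧ c.Chain' S.adj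

/-- Distance between two elements of an incidence structure: the least length of a
chain from `u` to `v`, or `∞` if there is none. -/
noncomputable def dist (S : IncStruct P B) (u v : P ⊕ B) : ℕ∞ :=
  sInf {n : ℕ∞ | ∃ (k : ℕ) (c : List (P ⊕ B)), n = (k : ℕ∞) ∧ S.IsNChain k u v c}

/-- A linear space: two distinct points lie on a unique common line, every line has
at least two points, and some point-line pair is non-incident. -/
def IsLinearSpace (S : IncStruct P B) : Prop :=
  (∀ p q : P, p ≠ q → ∃! b : B, S.inc p b ∧ S.inc q b) ∧
  (∀ b : B, ∃ p q : P, p ≠ q ∧ S.inc p b ∧ S.inc q b) ∧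
  (∃ (p : P) (b : B), ¬ S.inc p b)

/-- A generalized quadrangle: all distances are at most `4`, and whenever
`d(u,v) = k < 4` there is a unique `k`-chain from `u` to `v`. -/
def IsGQ (S : IncStruct P B) : Prop :=
  (∀ u v : P ⊕ B, S.dist u v ≤ 4) ∧
  ∀ (u v : P ⊕ B) (k : ℕ), k < 4 → S.dist u v = (k : ℕ∞) →
    ∃! c : List (P ⊕ B), S.IsNChain k u v c

end IncStruct

section Construction

variable {P B G : Type*} [Group G]

/-- Incidence of Construction 𝔐: points are `P ⊕ B × Λ` (the `x_p` and `y_{b,λ}`),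
lines are `P × Λ` (the `z_{p,μ}`); `x_p I' z_{p,λ}` always, and
`y_{b,λ} I' z_{p,μ}` iff `b I p` and `μ = φ(bp) • λ`. -/
def Minc (S : IncStruct P B) (φ : B → P → G) (Λ : Type*) [MulAction G Λ] :
    P ⊕ B × Λ → P × Λ → Prop
  | Sum.inl q, (p, _) => q = p
  | Sum.inr (b, l), (p, m) => S.inc p b ∧ m = φ b p • l

/-- The incidence structure 𝔐(Γ,φ) of Construction 𝔐. -/
def MStruct (S : IncStruct P B) (φ : B → P → G) (Λ : Type*) [MulAction G Λ] :
    IncStruct (P ⊕ B × Λ) (P × Λ) := ⟨Minc S φ Λ⟩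

/-- The gain `ρ_{b,p}(q) = φ(b'p) φ(b'q)⁻¹ φ(bq)` of the walk `(b, q, b', p)`,
where `b'` is the (unique, in a linear space) line through `p` and `q`. -/
noncomputable def rho (S : IncStruct P B) (φ : B → P → G) (b : B) (p q : P) : G :=
  if h : ∃ b' : B, S.inc p b' ∧ S.inc q b' then
    φ h.choose p * (φ h.choose q)⁻¹ * φ b q
  else 1

end Construction

/-- switching by `f` induces an isomorphism `𝔐(Γ,φ) ≅ 𝔐(Γ, ᶠφ)`. -/
theorem switching_isomorphism {P B G Λ : Type*} [Group G] [MulAction G Λ] [Nonempty Λ]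
    (S : IncStruct P B) (φ : B → P → G) (f : P ⊕ B → G) :
    let φf : B → P → G := fun b p => f (Sum.inl p) * φ b p * (f (Sum.inr b))⁻¹
    let g₁ : P ⊕ B × Λ → P ⊕ B × Λ := fun u =>
      match u with
      | Sum.inl p => Sum.inl p
      | Sum.inr (b, l) => Sum.inr (b, f (Sum.inr b) • l)
    let g₂ : P × Λ → P × Λ := fun z => (z.1, f (Sum.inl z.1) • z.2)
    Function.Bijective g₁ ∧ Function.Bijective g₂ ∧
      ∀ (u : P ⊕ B × Λ) (z : P × Λ),
        (MStruct S φ Λ).inc u z ↔ (MStruct S φf Λ).inc (g₁ u) (g₂ z) := by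
  intro φf g₁ g₂
  refine ⟨?_, ?_, ?_⟩
  · constructor
    · intro u v h
      match u, v with
      | Sum.inl p, Sum.inl q => simpa [g₁] using h
      | Sum.inl p, Sum.inr (b, l) => simp [g₁] at h
      | Sum.inr (b, l), Sum.inl p => simp [g₁] at h
      | Sum.inr (b, l), Sum.inr (b', l') =>
        simp only [g₁, Sum.inr.injEq, Prod.mk.injEq] at h
        obtain ⟨rfl, h2⟩ := h
        have := congrArg (fun x => (f (Sum.inr b))⁻¹ • x) h2
        simp at this
        simp [this]
    · intro u
      match u with
      | Sum.inl p => exact ⟨Sum.inl p, rfl⟩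
      | Sum.inr (b, l) => exact ⟨Sum.inr (b, (f (Sum.inr b))⁻¹ • l), by simp [g₁]⟩
  · constructor
    · intro ⟨p, l⟩ ⟨q, m⟩ h
      simp only [g₂, Prod.mk.injEq] at h
      obtain ⟨rfl, h2⟩ := h
      have := congrArg (fun x => (f (Sum.inl p))⁻¹ • x) h2
      simp at this
      simp [this]
    · intro ⟨p, l⟩
      exact ⟨(p, (f (Sum.inl p))⁻¹ • l), by simp [g₂]⟩
  · intro u z
    match u, z with
    | Sum.inl q, (p, m) => simp [MStruct, Minc, g₁, g₂]
    | Sum.inr (b, l), (p, m) =>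
      simp only [MStruct, Minc, g₁, g₂, φf]
      constructor
      · rintro ⟨h1, rfl⟩
        exact ⟨h1, by simp [mul_smul]⟩
      · rintro ⟨h1, h2⟩
        refine ⟨h1, ?_⟩
        have := congrArg (fun x => (f (Sum.inl p))⁻¹ • x) h2
        simpa [mul_smul] using this
end

section
/- Let (Γ,φ) be an incidence gain graph with underlying incidence structure (P,B,I) and gain group acting on a nonempty set Λ. For elements u₀,…,u_k ∈ P ∪ B (k ≥ 1), the sequence (u₀,…,u_k) is a k-chain in (P,B,I) if and only if there exist λ₀,…,λ_k ∈ Λ such that (m₀,…,m_k) is a k-chain in 𝔐(Γ,φ), where m_i = y_{u_i,λ_i} if u_i ∈ B and m_i = z_{u_i,λ_i} if u_i ∈ P. Moreover, in that case λ_k = φ_w · λ₀ where w is the corresponding walk in Γ. -/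
open Classical

section Stmt1

variable {P B G : Type*} [Group G]

/-- The gain of a single step of a walk in the incidence graph: edges are oriented
line-to-point, so a step from a line to a point contributes `φ(e)` and a step from a
point to a line contributes `φ(e)⁻¹`. -/
def stepGain (φ : B → P → G) : P ⊕ B → P ⊕ B → G
  | Sum.inr b, Sum.inl p => φ b p
  | Sum.inl p, Sum.inr b => (φ b p)⁻¹
  | _, _ => 1

/-- The gain `φ_w` of a walk `w = (u_0, …, u_k)`, multiplied "backwards":
`φ(e_k)^{δ_k} ⋯ φ(e_1)^{δ_1}`. -/
def walkGain (φ : B → P → G) : (k : ℕ) → (Fin (k + 1) → P ⊕ B) → G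
  | 0, _ => 1
  | k + 1, u =>
      stepGain φ (u (Fin.last k).castSucc) (u (Fin.last (k + 1))) *
        walkGain φ k (fun i => u i.castSucc)

/-- The element `m_i` of 𝔐(Γ,φ) associated to `u_i` and `λ_i`: the point
`y_{u_i,λ_i}` if `u_i` is a line, and the line `z_{u_i,λ_i}` if `u_i` is a point. -/
def mMap {Λ : Type*} {k : ℕ} (u : Fin (k + 1) → P ⊕ B) (lam : Fin (k + 1) → Λ)
    (i : Fin (k + 1)) : (P ⊕ B × Λ) ⊕ P × Λ :=
  match u i with
  | Sum.inl p => Sum.inr (p, lam i)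
  | Sum.inr b => Sum.inl (Sum.inr (b, lam i))

lemma madj_iff {Λ : Type*} [MulAction G Λ] (S : IncStruct P B) (φ : B → P → G)
    {k : ℕ} (u : Fin (k + 1) → P ⊕ B) (lam : Fin (k + 1) → Λ) (a b : Fin (k + 1)) :
    (MStruct S φ Λ).adj (mMap u lam a) (mMap u lam b) ↔
      S.adj (u a) (u b) ∧ lam b = stepGain φ (u a) (u b) • lam a := by
  rcases ha : u a with p | bb <;> rcases hb : u b with q | bb' <;>
    simp only [mMap, ha, hb, MStruct, IncStruct.adj, Minc, stepGain]
  all_goals try simp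
  all_goals try exact Iff.rfl
  · intro _
    constructor
    · intro h2; rw [h2, inv_smul_smul]
    · intro h2; rw [h2, smul_inv_smul]

lemma lam_last {Λ : Type*} [MulAction G Λ] (φ : B → P → G) :
    ∀ (k : ℕ) (u : Fin (k + 1) → P ⊕ B) (lam : Fin (k + 1) → Λ),
      (∀ i : Fin k, lam i.succ = stepGain φ (u i.castSucc) (u i.succ) • lam i.castSucc) →
      lam (Fin.last k) = walkGain φ k u • lam 0
  | 0, u, lam, _ => by simp [walkGain, Fin.last]
  | k + 1, u, lam, h => by
    have ih : lam (Fin.last k).castSucc =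
        walkGain φ k (fun i => u i.castSucc) • lam 0 := by
      have := lam_last φ k (fun i => u i.castSucc) (fun i => lam i.castSucc)
        (fun i => by
          have := h i.castSucc
          rwa [Fin.succ_castSucc] at this)
      simpa using this
    have hlast := h (Fin.last k)
    rw [Fin.succ_last] at hlast
    show lam (Fin.last (k+1)) = (stepGain φ (u (Fin.last k).castSucc) (u (Fin.last (k + 1))) *
        walkGain φ k (fun i => u i.castSucc)) • lam 0
    rw [mul_smul, ← ih]
    exact hlast

/-- `(u_0,…,u_k)` is a `k`-chain in `(P,B,I)` iff there are
`λ_0,…,λ_k` making `(m_0,…,m_k)` a `k`-chain in 𝔐(Γ,φ); moreover in that case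
`λ_k = φ_w • λ_0`. -/
theorem chain_correspondence {Λ : Type*} [MulAction G Λ] [Nonempty Λ]
    (S : IncStruct P B) (φ : B → P → G) (k : ℕ) (hk : 1 ≤ k)
    (u : Fin (k + 1) → P ⊕ B) :
    ((∀ i : Fin k, S.adj (u i.castSucc) (u i.succ)) ↔
      ∃ lam : Fin (k + 1) → Λ,
        ∀ i : Fin k,
          (MStruct S φ Λ).adj (mMap u lam i.castSucc) (mMap u lam i.succ)) ∧
    ∀ lam : Fin (k + 1) → Λ,
      (∀ i : Fin k,
          (MStruct S φ Λ).adj (mMap u lam i.castSucc) (mMap u lam i.succ)) →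
      lam (Fin.last k) = walkGain φ k u • lam 0 := by
  constructor
  · constructor
    · intro h
      obtain ⟨l0⟩ := (inferInstance : Nonempty Λ)
      -- build the gains along the walk
      let v : ℕ → P ⊕ B := fun n => u ⟨min n k, by omega⟩
      let g : ℕ → G := fun n => Nat.rec 1 (fun m gm => stepGain φ (v m) (v (m + 1)) * gm) n
      refine ⟨fun i => g i • l0, fun i => ?_⟩
      rw [madj_iff]
      refine ⟨h i, ?_⟩
      have hc : (i.castSucc : Fin (k + 1)) = ⟨min i.1 k, by omega⟩ := by
        ext; simp [Nat.min_eq_left (le_of_lt i.2)]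
      have hs : (i.succ : Fin (k + 1)) = ⟨min (i.1 + 1) k, by omega⟩ := by
        ext; simp [Nat.min_eq_left i.2]
      have : g (i.1 + 1) • l0 = stepGain φ (u i.castSucc) (u i.succ) • g i.1 • l0 := by
        rw [hc, hs]
        show (stepGain φ (v i.1) (v (i.1 + 1)) * g i.1) • l0 = _
        rw [mul_smul]
      simpa [Fin.succ, Fin.castSucc, Fin.castAdd, Fin.castLE] using this
    · rintro ⟨lam, hlam⟩ i
      exact ((madj_iff S φ u lam i.castSucc i.succ).mp (hlam i)).1
  · intro lam hlam
    exact lam_last φ k u lam fun i =>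
      ((madj_iff S φ u lam i.castSucc i.succ).mp (hlam i)).2

end Stmt1
end

section
/- Let (Γ,φ) be an incidence gain graph whose underlying incidence structure (P,B,I) is a linear space, with gain group acting on a nonempty set Λ. If p ≠ q are points of P and λ ∈ Λ, then the distance from x_p to z_{q,λ} in 𝔐(Γ,φ) equals 3, and there is a unique 3-chain from x_p to z_{q,λ}. -/
open Classical

/-- in 𝔐(Γ,φ) over a linear space, for `p ≠ q` the distance from
`x_p` to `z_{q,λ}` is `3`, and there is a unique `3`-chain between them. -/
theorem dist_xp_zq {P B G Λ : Type*} [Group G] [MulAction G Λ] [Nonempty Λ]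
    (S : IncStruct P B) (φ : B → P → G) (hLS : S.IsLinearSpace)
    (p q : P) (hpq : p ≠ q) (lam : Λ) :
    (MStruct S φ Λ).dist (Sum.inl (Sum.inl p)) (Sum.inr (q, lam)) = 3 ∧
    ∃! c : List ((P ⊕ B × Λ) ⊕ P × Λ),
      (MStruct S φ Λ).IsNChain 3 (Sum.inl (Sum.inl p)) (Sum.inr (q, lam)) c := by
  obtain ⟨b, ⟨hpb, hqb⟩, hbu⟩ := hLS.1 p q hpq
  set l : Λ := (φ b q)⁻¹ • lam with hl
  set c₀ : List ((P ⊕ B × Λ) ⊕ P × Λ) :=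
    [Sum.inl (Sum.inl p), Sum.inr (p, φ b p • l), Sum.inl (Sum.inr (b, l)), Sum.inr (q, lam)]
    with hc₀
  have hchain : (MStruct S φ Λ).IsNChain 3 (Sum.inl (Sum.inl p)) (Sum.inr (q, lam)) c₀ := by
    refine ⟨rfl, rfl, rfl, ?_⟩
    simp only [hc₀, List.Chain', List.isChain_cons_cons, List.isChain_singleton, and_true]
    refine ⟨rfl, ⟨hpb, rfl⟩, hqb, ?_⟩
    rw [hl, smul_inv_smul]
  have huniq : ∀ c, (MStruct S φ Λ).IsNChain 3 (Sum.inl (Sum.inl p)) (Sum.inr (q, lam)) c →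
      c = c₀ := by
    rintro c ⟨hlen, hhead, hlast, hch⟩
    match c, hlen with
    | [a0, a1, a2, a3], _ =>
      simp only [List.head?] at hhead
      have ha0 : a0 = Sum.inl (Sum.inl p) := by injection hhead
      have ha3 : a3 = Sum.inr (q, lam) := by
        have := hlast
        simp only [List.getLast?] at this
        injection this
      subst ha0 ha3
      simp only [List.Chain', List.isChain_cons_cons, List.isChain_singleton, and_true] at hch
      obtain ⟨h01, h12, h23⟩ := hch
      -- a1 must be a line
      rcases a1 with pt1 | ⟨p1, mu⟩
      · exact absurd h01 (by cases pt1 <;> exact not_false)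
      -- adj x_p z_{p1,mu} : p = p1
      have hp1 : p = p1 := h01
      subst hp1
      -- a2 must be a point
      rcases a2 with pt2 | z2
      swap
      · exact absurd h12 not_false
      rcases pt2 with r | ⟨b', l'⟩
      · -- x_r incident to z_{p,mu} and z_{q,lam}: r = p and r = q
        have h1 : r = p := h12
        have h2 : r = q := h23
        exact absurd (h1 ▸ h2) hpq
      · obtain ⟨hpb', hmu⟩ : S.inc p b' ∧ mu = φ b' p • l' := h12
        obtain ⟨hqb', hlam⟩ : S.inc q b' ∧ lam = φ b' q • l' := h23
        have hb' : b' = b := hbu b' ⟨hpb', hqb'⟩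
        subst hb'
        have hl' : l' = l := by rw [hl, hlam, inv_smul_smul]
        subst hl'
        rw [hmu]
  refine ⟨?_, c₀, hchain, fun c hc => huniq c hc⟩
  apply le_antisymm
  · exact sInf_le ⟨3, c₀, rfl, hchain⟩
  · apply le_sInf
    rintro n ⟨k, c, rfl, hlen, hhead, hlast, hch⟩
    have hk : 3 ≤ k := by
      by_contra hk
      push_neg at hk
      interval_cases k
      · match c, hlen with
        | [a0], _ =>
          simp only [List.head?] at hhead
          simp only [List.getLast?] at hlast
          have h1 : a0 = Sum.inl (Sum.inl p) := by injection hhead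
          have h2 : a0 = Sum.inr (q, lam) := by injection hlast
          rw [h1] at h2
          exact absurd h2 (by simp)
      · match c, hlen with
        | [a0, a1], _ =>
          simp only [List.head?] at hhead
          simp only [List.getLast?] at hlast
          have h1 : a0 = Sum.inl (Sum.inl p) := by injection hhead
          have h2 : a1 = Sum.inr (q, lam) := by injection hlast
          subst h1; subst h2
          simp only [List.Chain', List.isChain_cons_cons, List.isChain_singleton, and_true] at hch
          exact hpq hch
      · match c, hlen with
        | [a0, a1, a2], _ =>
          simp only [List.head?] at hhead
          simp only [List.getLast?] at hlast
          have h1 : a0 = Sum.inl (Sum.inl p) := by injection hhead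
          have h2 : a2 = Sum.inr (q, lam) := by injection hlast
          subst h1; subst h2
          simp only [List.Chain', List.isChain_cons_cons, List.isChain_singleton, and_true] at hch
          obtain ⟨h01, h12⟩ := hch
          rcases a1 with pt | z
          · exact absurd h01 (by cases pt <;> exact not_false)
          · exact absurd h12 not_false
    exact_mod_cast hk
end

section
/- Let (Γ,φ) be an incidence gain graph whose underlying incidence structure (P,B,I) is a linear space, with gain group acting on a nonempty set Λ. If b I p and μ ≠ φ(bp)·λ, then the distance from y_{b,λ} to z_{p,μ} in 𝔐(Γ,φ) equals 3, and there is a unique 3-chain from y_{b,λ} to z_{p,μ}, namely (y_{b,λ}, z_{p,φ(bp)·λ}, x_p, z_{p,μ}). -/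
open Classical

/-- in 𝔐(Γ,φ) over a linear space, if `b I p` and `μ ≠ φ(bp) • λ`, then
the distance from `y_{b,λ}` to `z_{p,μ}` is `3` and the unique `3`-chain between them
is `(y_{b,λ}, z_{p,φ(bp)•λ}, x_p, z_{p,μ})`. -/
theorem dist_y_z_incident {P B G Λ : Type*} [Group G] [MulAction G Λ] [Nonempty Λ]
    (S : IncStruct P B) (φ : B → P → G) (hLS : S.IsLinearSpace)
    (b : B) (p : P) (hbp : S.inc p b) (lam mu : Λ) (hmu : mu ≠ φ b p • lam) :
    (MStruct S φ Λ).dist (Sum.inl (Sum.inr (b, lam))) (Sum.inr (p, mu)) = 3 ∧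
    (MStruct S φ Λ).IsNChain 3 (Sum.inl (Sum.inr (b, lam))) (Sum.inr (p, mu))
      [Sum.inl (Sum.inr (b, lam)), Sum.inr (p, φ b p • lam),
        Sum.inl (Sum.inl p), Sum.inr (p, mu)] ∧
    ∀ c : List ((P ⊕ B × Λ) ⊕ P × Λ),
      (MStruct S φ Λ).IsNChain 3 (Sum.inl (Sum.inr (b, lam))) (Sum.inr (p, mu)) c →
      c = [Sum.inl (Sum.inr (b, lam)), Sum.inr (p, φ b p • lam),
        Sum.inl (Sum.inl p), Sum.inr (p, mu)] := by

  classical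
  set u : (P ⊕ B × Λ) ⊕ P × Λ := Sum.inl (Sum.inr (b, lam)) with hu
  set v : (P ⊕ B × Λ) ⊕ P × Λ := Sum.inr (p, mu) with hv
  set M := MStruct S φ Λ with hM
  have hchain : M.IsNChain 3 u v
      [u, Sum.inr (p, φ b p • lam), Sum.inl (Sum.inl p), v] := by
    refine ⟨rfl, rfl, rfl, ?_⟩
    simp only [List.Chain', List.isChain_cons_cons, List.isChain_singleton, and_true]
    exact ⟨⟨hbp, rfl⟩, rfl, rfl⟩
  have huniq : ∀ c, M.IsNChain 3 u v c →
      c = [u, Sum.inr (p, φ b p • lam), Sum.inl (Sum.inl p), v] := by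
    rintro c ⟨hlen, hhead, hlast, hch⟩
    rcases c with _ | ⟨a1, c⟩; · simp at hlen
    rcases c with _ | ⟨a2, c⟩; · simp at hlen
    rcases c with _ | ⟨a3, c⟩; · simp at hlen
    rcases c with _ | ⟨a4, c⟩; · simp at hlen
    rcases c with _ | ⟨a5, c⟩
    swap
    · simp [List.length_cons] at hlen
    simp only [List.head?_cons, Option.some.injEq] at hhead
    subst hhead
    have hlast' : a4 = v := by
      simpa [List.getLast?] using hlast
    subst hlast'
    simp only [List.Chain', List.isChain_cons_cons, List.isChain_singleton, and_true] at hch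
    obtain ⟨h12, h23, h34⟩ := hch
    -- a2 must be a line
    rcases a2 with a2 | ⟨p1, m1⟩
    · exact absurd h12 (by simp [IncStruct.adj])
    have h12' : S.inc p1 b ∧ m1 = φ b p1 • lam := h12
    -- a3 must be a point
    rcases a3 with a3 | a3
    swap
    · exact absurd h23 (by simp [IncStruct.adj])
    rcases a3 with q | ⟨b2, l2⟩
    · -- x-point case
      have hq1 : q = p1 := h23
      have hqp : q = p := h34
      subst hqp
      obtain ⟨_, hm1⟩ := h12'
      rw [← hq1] at hm1
      rw [hm1, hq1.symm]
    · -- y-point case: contradiction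
      have h23' : S.inc p1 b2 ∧ m1 = φ b2 p1 • l2 := h23
      have h34' : S.inc p b2 ∧ mu = φ b2 p • l2 := h34
      exfalso
      by_cases hp : p1 = p
      · subst hp
        exact hmu (h34'.2.trans (h23'.2.symm.trans h12'.2))
      · obtain ⟨b', _, hb'u⟩ := hLS.1 p1 p hp
        have hb : b = b' := hb'u b ⟨h12'.1, hbp⟩
        have hb2 : b2 = b' := hb'u b2 ⟨h23'.1, h34'.1⟩
        have hbb2 : b2 = b := hb2.trans hb.symm
        subst hbb2
        have : lam = l2 := by
          have := h12'.2.symm.trans h23'.2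
          exact smul_left_cancel _ this
        exact hmu (by rw [h34'.2, ← this])
  have hmem : (3 : ℕ∞) ∈ {n : ℕ∞ | ∃ (k : ℕ) (c : List ((P ⊕ B × Λ) ⊕ P × Λ)),
      n = (k : ℕ∞) ∧ M.IsNChain k u v c} :=
    ⟨3, _, by norm_num, hchain⟩
  have hdist : M.dist u v = 3 := by
    refine le_antisymm (sInf_le hmem) (le_sInf ?_)
    rintro n ⟨k, c, rfl, hlen, hhead, hlast, hch⟩
    have hk : 3 ≤ k := by
      by_contra hk
      push_neg at hk
      interval_cases k
      · rcases c with _ | ⟨a1, _ | ⟨a2, c⟩⟩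
        · simp at hlen
        · simp only [List.head?_cons, Option.some.injEq] at hhead
          have : a1 = v := by simpa [List.getLast?] using hlast
          rw [hhead] at this
          simp [hu, hv] at this
        · simp at hlen
      · rcases c with _ | ⟨a1, _ | ⟨a2, _ | ⟨a3, c⟩⟩⟩
        · simp at hlen
        · simp at hlen
        · simp only [List.head?_cons, Option.some.injEq] at hhead
          have ha2 : a2 = v := by simpa [List.getLast?] using hlast
          subst hhead; subst ha2
          simp only [List.Chain', List.isChain_cons_cons, List.isChain_singleton, and_true] at hch
          have : S.inc p b ∧ mu = φ b p • lam := hch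
          exact hmu this.2
        · simp at hlen
      · rcases c with _ | ⟨a1, _ | ⟨a2, _ | ⟨a3, _ | ⟨a4, c⟩⟩⟩⟩
        · simp at hlen
        · simp at hlen
        · simp at hlen
        · simp only [List.head?_cons, Option.some.injEq] at hhead
          have ha3 : a3 = v := by simpa [List.getLast?] using hlast
          subst hhead; subst ha3
          simp only [List.Chain', List.isChain_cons_cons, List.isChain_singleton, and_true] at hch
          obtain ⟨h12, h23⟩ := hch
          rcases a2 with a2 | a2
          · exact h12
          · exact h23
        · simp at hlen
    exact_mod_cast hk
  exact ⟨hdist, hchain, huniq⟩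
end

section
/- Let (Γ,φ) be an incidence gain graph whose underlying incidence structure (P,B,I) is a linear space, with gain group G acting on a nonempty set Λ. Then 𝔐(Γ,φ) is a generalized quadrangle if and only if for every p ∈ P and b ∈ B with p not incident to b, and every λ ∈ Λ, the function ρ_{b,p,λ} : P_b → Λ given by ρ_{b,p,λ}(q) = ρ_{b,p}(q)·λ is a bijection. -/
open Classical

section Helpers

namespace IncStruct

variable {P B : Type*} {S : IncStruct P B}

lemma adj_symm {u v : P ⊕ B} (h : S.adj u v) : S.adj v u := by
  rcases u with u | u <;> rcases v with v | v <;> simp [IncStruct.adj] at h ⊢ <;> exact h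

lemma adj_isLeft {u v : P ⊕ B} (h : S.adj u v) : u.isLeft = !v.isLeft := by
  rcases u with u | u <;> rcases v with v | v <;> simp [IncStruct.adj] at h ⊢

lemma IsNChain.reverse {k : ℕ} {u v : P ⊕ B} {c : List (P ⊕ B)}
    (h : S.IsNChain k u v c) : S.IsNChain k v u c.reverse := by
  obtain ⟨h1, h2, h3, h4⟩ := h
  refine ⟨by simpa using h1, by simpa using h3, by simpa using h2, ?_⟩
  show List.IsChain S.adj c.reverse
  rw [List.isChain_reverse]
  exact List.IsChain.imp (fun a b hab => adj_symm hab) h4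

lemma mk0 (u : P ⊕ B) : S.IsNChain 0 u u [u] := by
  refine ⟨rfl, rfl, ?_, ?_⟩ <;> simp [List.Chain']

lemma mk1 {u v : P ⊕ B} (h : S.adj u v) : S.IsNChain 1 u v [u, v] := by
  refine ⟨rfl, rfl, ?_, ?_⟩ <;> simp [List.Chain', h]

lemma mk2 {u w v : P ⊕ B} (h1 : S.adj u w) (h2 : S.adj w v) :
    S.IsNChain 2 u v [u, w, v] := by
  refine ⟨rfl, rfl, ?_, ?_⟩ <;> simp [List.Chain', h1, h2]

lemma mk3 {u w1 w2 v : P ⊕ B} (h1 : S.adj u w1) (h2 : S.adj w1 w2) (h3 : S.adj w2 v) :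
    S.IsNChain 3 u v [u, w1, w2, v] := by
  refine ⟨rfl, rfl, ?_, ?_⟩ <;> simp [List.Chain', h1, h2, h3]

lemma mk4 {u w1 w2 w3 v : P ⊕ B} (h1 : S.adj u w1) (h2 : S.adj w1 w2)
    (h3 : S.adj w2 w3) (h4 : S.adj w3 v) : S.IsNChain 4 u v [u, w1, w2, w3, v] := by
  refine ⟨rfl, rfl, ?_, ?_⟩ <;> simp [List.Chain', h1, h2, h3, h4]

lemma chain0 {u v : P ⊕ B} {c : List (P ⊕ B)} (h : S.IsNChain 0 u v c) :
    c = [u] ∧ u = v := by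
  obtain ⟨h1, h2, h3, h4⟩ := h
  rcases c with _ | ⟨a, _ | ⟨a2, t⟩⟩
  · simp at h1
  · simp at h2 h3
    subst h2; subst h3; exact ⟨rfl, rfl⟩
  · simp at h1

lemma chain1 {u v : P ⊕ B} {c : List (P ⊕ B)} (h : S.IsNChain 1 u v c) :
    c = [u, v] ∧ S.adj u v := by
  obtain ⟨h1, h2, h3, h4⟩ := h
  rcases c with _ | ⟨a, _ | ⟨a2, _ | ⟨a3, t⟩⟩⟩
  · simp at h1
  · simp at h1
  · simp [List.Chain', List.isChain_cons_cons] at h2 h3 h4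
    subst h2; subst h3; exact ⟨rfl, h4⟩
  · simp at h1

lemma chain2 {u v : P ⊕ B} {c : List (P ⊕ B)} (h : S.IsNChain 2 u v c) :
    ∃ w, c = [u, w, v] ∧ S.adj u w ∧ S.adj w v := by
  obtain ⟨h1, h2, h3, h4⟩ := h
  rcases c with _ | ⟨a, _ | ⟨a2, _ | ⟨a3, _ | ⟨a4, t⟩⟩⟩⟩
  · simp at h1
  · simp at h1
  · simp at h1
  · simp [List.Chain', List.isChain_cons_cons] at h2 h3 h4
    subst h2; subst h3; exact ⟨a2, rfl, h4.1, h4.2⟩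
  · simp at h1

lemma chain3 {u v : P ⊕ B} {c : List (P ⊕ B)} (h : S.IsNChain 3 u v c) :
    ∃ w1 w2, c = [u, w1, w2, v] ∧ S.adj u w1 ∧ S.adj w1 w2 ∧ S.adj w2 v := by
  obtain ⟨h1, h2, h3, h4⟩ := h
  rcases c with _ | ⟨a, _ | ⟨a2, _ | ⟨a3, _ | ⟨a4, _ | ⟨a5, t⟩⟩⟩⟩⟩
  · simp at h1
  · simp at h1
  · simp at h1
  · simp at h1
  · simp [List.Chain', List.isChain_cons_cons] at h2 h3 h4
    subst h2; subst h3; exact ⟨a2, a3, rfl, h4.1, h4.2.1, h4.2.2⟩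
  · simp at h1

lemma chain4 {u v : P ⊕ B} {c : List (P ⊕ B)} (h : S.IsNChain 4 u v c) :
    ∃ w1 w2 w3, c = [u, w1, w2, w3, v] ∧ S.adj u w1 ∧ S.adj w1 w2 ∧ S.adj w2 w3 ∧
      S.adj w3 v := by
  obtain ⟨h1, h2, h3, h4⟩ := h
  rcases c with _ | ⟨a, _ | ⟨a2, _ | ⟨a3, _ | ⟨a4, _ | ⟨a5, _ | ⟨a6, t⟩⟩⟩⟩⟩⟩
  · simp at h1
  · simp at h1
  · simp at h1
  · simp at h1
  · simp at h1
  · simp [List.Chain', List.isChain_cons_cons] at h2 h3 h4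
    subst h2; subst h3; exact ⟨a2, a3, a4, rfl, h4.1, h4.2.1, h4.2.2.1, h4.2.2.2⟩
  · simp at h1

lemma dist_le {k : ℕ} {u v : P ⊕ B} {c : List (P ⊕ B)} (h : S.IsNChain k u v c) :
    S.dist u v ≤ (k : ℕ∞) :=
  sInf_le ⟨k, c, rfl, h⟩

lemma exists_chain_dist {u v : P ⊕ B} (h : S.dist u v ≠ ⊤) :
    ∃ (k : ℕ) (c : List (P ⊕ B)), S.dist u v = (k : ℕ∞) ∧ S.IsNChain k u v c := by
  have hne : {n : ℕ∞ | ∃ (k : ℕ) (c : List (P ⊕ B)), n = (k : ℕ∞) ∧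
      S.IsNChain k u v c}.Nonempty := by
    by_contra hemp
    rw [Set.not_nonempty_iff_eq_empty] at hemp
    apply h
    rw [IncStruct.dist, hemp, sInf_empty]
  have hTne : {k : ℕ | ∃ c, S.IsNChain k u v c}.Nonempty := by
    obtain ⟨n, k, c, rfl, hc⟩ := hne
    exact ⟨k, c, hc⟩
  have hmem := Nat.sInf_mem hTne
  rw [Set.mem_setOf_eq] at hmem
  obtain ⟨c, hc⟩ := hmem
  refine ⟨_, c, ?_, hc⟩
  refine le_antisymm (dist_le hc) ?_
  apply le_sInf
  rintro n ⟨k, c', rfl, hc'⟩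
  have hk : k ∈ {k : ℕ | ∃ c, S.IsNChain k u v c} := ⟨c', hc'⟩
  exact_mod_cast Nat.sInf_le hk

lemma dist_comm (u v : P ⊕ B) : S.dist u v = S.dist v u := by
  unfold IncStruct.dist
  congr 1
  ext n
  constructor <;> rintro ⟨k, c, rfl, hc⟩ <;> exact ⟨k, c.reverse, rfl, hc.reverse⟩

lemma dist_eq_three {u v : P ⊕ B} (h4 : S.dist u v ≤ 4) (hL : u.isLeft ≠ v.isLeft)
    (h1 : ¬ S.adj u v) : S.dist u v = 3 := by
  have hne : S.dist u v ≠ ⊤ := by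
    intro h; rw [h] at h4; exact absurd h4 (by simp)
  obtain ⟨k, c, hd, hc⟩ := exists_chain_dist hne
  rw [hd] at h4 ⊢
  have hk : k ≤ 4 := by exact_mod_cast h4
  interval_cases k
  · exact absurd ((chain0 hc).2 ▸ rfl) hL
  · exact absurd (chain1 hc).2 h1
  · obtain ⟨w, _, a1, a2⟩ := chain2 hc
    have e1 := adj_isLeft a1; have e2 := adj_isLeft a2; simp_all
  · rfl
  · obtain ⟨w1, w2, w3, _, a1, a2, a3, a4⟩ := chain4 hc
    have e1 := adj_isLeft a1; have e2 := adj_isLeft a2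
    have e3 := adj_isLeft a3; have e4 := adj_isLeft a4; simp_all

lemma existsUnique_rev {k : ℕ} {u v : P ⊕ B}
    (h : ∃! c, S.IsNChain k u v c) : ∃! c, S.IsNChain k v u c := by
  obtain ⟨c, hc, hu⟩ := h
  refine ⟨c.reverse, hc.reverse, fun c' hc' => ?_⟩
  have := hu _ hc'.reverse
  rw [← this]
  simp

end IncStruct

end Helpers

section MHelpers

open IncStruct

variable {P B G Λ : Type*} [Group G] [MulAction G Λ]
variable {S : IncStruct P B} {φ : B → P → G}

@[simp] lemma madj_xz {q p : P} {m : Λ} :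
    (MStruct S φ Λ).adj (Sum.inl (Sum.inl q)) (Sum.inr (p, m)) ↔ q = p := Iff.rfl

@[simp] lemma madj_zx {q p : P} {m : Λ} :
    (MStruct S φ Λ).adj (Sum.inr (p, m)) (Sum.inl (Sum.inl q)) ↔ q = p := Iff.rfl

@[simp] lemma madj_yz {b : B} {l : Λ} {p : P} {m : Λ} :
    (MStruct S φ Λ).adj (Sum.inl (Sum.inr (b, l))) (Sum.inr (p, m)) ↔
      S.inc p b ∧ m = φ b p • l := Iff.rfl

@[simp] lemma madj_zy {b : B} {l : Λ} {p : P} {m : Λ} :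
    (MStruct S φ Λ).adj (Sum.inr (p, m)) (Sum.inl (Sum.inr (b, l))) ↔
      S.inc p b ∧ m = φ b p • l := Iff.rfl

@[simp] lemma madj_pp {a a' : P ⊕ B × Λ} :
    (MStruct S φ Λ).adj (Sum.inl a) (Sum.inl a') ↔ False := Iff.rfl

@[simp] lemma madj_ll {a a' : P × Λ} :
    (MStruct S φ Λ).adj (Sum.inr a) (Sum.inr a') ↔ False := Iff.rfl

lemma line_unique (hLS : S.IsLinearSpace) {p q : P} (hpq : p ≠ q) {b c : B}
    (hpb : S.inc p b) (hqb : S.inc q b) (hpc : S.inc p c) (hqc : S.inc q c) :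
    b = c := by
  obtain ⟨b₀, _, hb₀⟩ := hLS.1 p q hpq
  rw [hb₀ b ⟨hpb, hqb⟩, hb₀ c ⟨hpc, hqc⟩]

lemma point_unique (hLS : S.IsLinearSpace) {b c : B} (hbc : b ≠ c) {p q : P}
    (hpb : S.inc p b) (hpc : S.inc p c) (hqb : S.inc q b) (hqc : S.inc q c) :
    p = q := by
  by_contra hpq
  exact hbc (line_unique hLS hpq hpb hqb hpc hqc)

lemma rho_eq (hLS : S.IsLinearSpace) {p q : P} (hpq : p ≠ q) {c : B}
    (hpc : S.inc p c) (hqc : S.inc q c) (b : B) :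
    rho S φ b p q = φ c p * (φ c q)⁻¹ * φ b q := by
  have hex : ∃ b' : B, S.inc p b' ∧ S.inc q b' := ⟨c, hpc, hqc⟩
  have hch : hex.choose = c :=
    line_unique hLS hpq hex.choose_spec.1 hex.choose_spec.2 hpc hqc
  rw [rho, dif_pos hex, hch]

lemma rho_smul (hLS : S.IsLinearSpace) {p q : P} (hpq : p ≠ q) {c : B}
    (hpc : S.inc p c) (hqc : S.inc q c) (b : B) (l : Λ) :
    rho S φ b p q • l = φ c p • ((φ c q)⁻¹ • (φ b q • l)) := by
  rw [rho_eq hLS hpq hpc hqc b, mul_smul, mul_smul]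

/-- The canonical `3`-chain from `y_{b,l}` to `z_{p, ρ_{b,p}(q)•l}` through `z_q`. -/
lemma chain3_of_rho (hLS : S.IsLinearSpace) {b : B} {p q : P} (hpb : ¬ S.inc p b)
    (hq : S.inc q b) (l : Λ) :
    ∃ w, (MStruct S φ Λ).IsNChain 3 (Sum.inl (Sum.inr (b, l)))
      (Sum.inr (p, rho S φ b p q • l))
      [Sum.inl (Sum.inr (b, l)), Sum.inr (q, φ b q • l), w,
       Sum.inr (p, rho S φ b p q • l)] := by
  have hpq : p ≠ q := fun h => hpb (h ▸ hq)
  obtain ⟨c, ⟨hpc, hqc⟩, -⟩ := hLS.1 p q hpq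
  refine ⟨Sum.inl (Sum.inr (c, (φ c q)⁻¹ • (φ b q • l))), IncStruct.mk3 ?_ ?_ ?_⟩
  · exact madj_yz.mpr ⟨hq, rfl⟩
  · exact madj_zy.mpr ⟨hqc, (smul_inv_smul _ _).symm⟩
  · exact madj_yz.mpr ⟨hpc, rho_smul hLS hpq hpc hqc b l⟩

/-- Decoding a `3`-chain from `y_{b,l}` to `z_{p,μ}` when `p ∉ b`. -/
lemma decode3 (hLS : S.IsLinearSpace) {b : B} {p : P} {μ l : Λ}
    {c : List ((P ⊕ B × Λ) ⊕ P × Λ)} (hpb : ¬ S.inc p b)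
    (hc : (MStruct S φ Λ).IsNChain 3 (Sum.inl (Sum.inr (b, l))) (Sum.inr (p, μ)) c) :
    ∃ (q : P) (d : B), S.inc q b ∧ S.inc p d ∧ S.inc q d ∧ rho S φ b p q • l = μ ∧
      c = [Sum.inl (Sum.inr (b, l)), Sum.inr (q, φ b q • l),
           Sum.inl (Sum.inr (d, (φ d q)⁻¹ • (φ b q • l))), Sum.inr (p, μ)] := by
  obtain ⟨w1, w2, hshape, a1, a2, a3⟩ := IncStruct.chain3 hc
  rcases w1 with w1 | ⟨q, ν⟩
  · simp only [madj_pp] at a1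
  rcases w2 with (r | ⟨d, l2⟩) | w2
  · -- w2 = x_r : impossible since p ∉ b
    simp only [madj_zx, madj_xz] at a2 a3
    subst a3; subst a2
    simp only [madj_yz] at a1
    exact absurd a1.1 hpb
  · -- w2 = y_{d,l2}
    simp only [madj_yz, madj_zy] at a1 a2 a3
    obtain ⟨hqb, hν⟩ := a1
    obtain ⟨hqd, hν2⟩ := a2
    obtain ⟨hpd, hμ⟩ := a3
    have hpq : p ≠ q := fun h => hpb (h ▸ hqb)
    have hl2 : l2 = (φ d q)⁻¹ • (φ b q • l) := by
      rw [← hν, hν2, inv_smul_smul]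
    have hrho : rho S φ b p q • l = μ := by
      rw [rho_smul hLS hpq hpd hqd b l, ← hl2, ← hμ]
    subst hν; subst hl2
    exact ⟨q, d, hqb, hpd, hqd, hrho, hshape⟩
  · simp only [madj_ll] at a2

/-- Decoding a `3`-chain from `x_q` to `z_{p,μ}` when `q ≠ p`. -/
lemma decodeX (hLS : S.IsLinearSpace) {q p : P} {μ : Λ}
    {c : List ((P ⊕ B × Λ) ⊕ P × Λ)} (hqp : q ≠ p)
    (hc : (MStruct S φ Λ).IsNChain 3 (Sum.inl (Sum.inl q)) (Sum.inr (p, μ)) c) :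
    ∃ (d : B) (l2 : Λ), S.inc p d ∧ S.inc q d ∧ μ = φ d p • l2 ∧
      c = [Sum.inl (Sum.inl q), Sum.inr (q, φ d q • l2),
           Sum.inl (Sum.inr (d, l2)), Sum.inr (p, μ)] := by
  obtain ⟨w1, w2, hshape, a1, a2, a3⟩ := IncStruct.chain3 hc
  rcases w1 with w1 | ⟨r, ν⟩
  · simp only [madj_pp] at a1
  simp only [madj_xz] at a1
  subst a1
  rcases w2 with (s | ⟨d, l2⟩) | w2
  · simp only [madj_zx, madj_xz] at a2 a3
    subst a2; subst a3
    exact absurd rfl hqp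
  · simp only [madj_zy, madj_yz] at a2 a3
    obtain ⟨hqd, hν⟩ := a2
    obtain ⟨hpd, hμ⟩ := a3
    subst hν
    exact ⟨d, l2, hpd, hqd, hμ, hshape⟩
  · simp only [madj_ll] at a2

/-- Decoding a `3`-chain from `y_{b,l}` to `z_{p,μ}` when `p ∈ b` (and they are not
incident): the chain must pass through `x_p`. -/
lemma decodeY_incl (hLS : S.IsLinearSpace) {b : B} {p : P} {μ l : Λ}
    {c : List ((P ⊕ B × Λ) ⊕ P × Λ)} (hpb : S.inc p b) (hμ : μ ≠ φ b p • l)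
    (hc : (MStruct S φ Λ).IsNChain 3 (Sum.inl (Sum.inr (b, l))) (Sum.inr (p, μ)) c) :
    c = [Sum.inl (Sum.inr (b, l)), Sum.inr (p, φ b p • l),
         Sum.inl (Sum.inl p), Sum.inr (p, μ)] := by
  obtain ⟨w1, w2, hshape, a1, a2, a3⟩ := IncStruct.chain3 hc
  rcases w1 with w1 | ⟨q, ν⟩
  · simp only [madj_pp] at a1
  simp only [madj_yz] at a1
  obtain ⟨hqb, hν⟩ := a1
  rcases w2 with (r | ⟨d, l2⟩) | w2
  · simp only [madj_zx, madj_xz] at a2 a3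
    subst a2; subst a3; subst hν
    exact hshape
  · exfalso
    simp only [madj_zy, madj_yz] at a2 a3
    obtain ⟨hqd, hν2⟩ := a2
    obtain ⟨hpd, hμ2⟩ := a3
    by_cases hqp : q = p
    · subst hqp
      exact hμ (by rw [hμ2, ← hν2, hν])
    · have hdb : d = b := line_unique hLS hqp hqd hpd hqb hpb
      subst hdb
      have hl2 : l2 = l := smul_left_cancel _ (hν2.symm.trans hν)
      subst hl2
      exact hμ hμ2
  · simp only [madj_ll] at a2

/-- Uniqueness of common neighbours in `𝔐(Γ,φ)`. -/
lemma nbr_unique (hLS : S.IsLinearSpace) {u v w w' : (P ⊕ B × Λ) ⊕ P × Λ}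
    (hne : u ≠ v) (h1 : (MStruct S φ Λ).adj u w) (h2 : (MStruct S φ Λ).adj w v)
    (h1' : (MStruct S φ Λ).adj u w') (h2' : (MStruct S φ Λ).adj w' v) : w = w' := by
  rcases u with (pu | ⟨bu, lu⟩) | ⟨pu, mu⟩ <;>
    rcases v with (pv | ⟨bv, lv⟩) | ⟨pv, mv⟩ <;>
    rcases w with (pw | ⟨bw, lw⟩) | ⟨pw, mw⟩ <;>
    rcases w' with (pw' | ⟨bw', lw'⟩) | ⟨pw', mw'⟩ <;>
    simp only [madj_pp, madj_ll, madj_xz, madj_zx, madj_yz, madj_zy] at h1 h2 h1' h2'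
  -- u = x, v = x
  · simp_all
  -- u = x, v = y
  · simp_all
  -- u = y, v = x
  · simp_all
  -- u = y, v = y : two z's
  · obtain ⟨i1, e1⟩ := h1
    obtain ⟨i2, e2⟩ := h2
    obtain ⟨i1', e1'⟩ := h1'
    obtain ⟨i2', e2'⟩ := h2'
    by_cases hb : bu = bv
    · exfalso
      subst hb
      apply hne
      have : lu = lv := smul_left_cancel _ (e1.symm.trans e2)
      rw [this]
    · have hp : pw = pw' := point_unique hLS hb i1 i2 i1' i2'
      subst hp
      rw [e1, e1']
  -- u = z, v = z, w = x, w' = x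
  · simp_all
  -- u = z, v = z, w = x, w' = y
  · exfalso
    subst h1; subst h2
    obtain ⟨i1, e1⟩ := h1'
    obtain ⟨i2, e2⟩ := h2'
    exact hne (by rw [e1, e2])
  -- u = z, v = z, w = y, w' = x
  · exfalso
    subst h1'; subst h2'
    obtain ⟨i1, e1⟩ := h1
    obtain ⟨i2, e2⟩ := h2
    exact hne (by rw [e1, e2])
  -- u = z, v = z, w = y, w' = y
  · obtain ⟨i1, e1⟩ := h1
    obtain ⟨i2, e2⟩ := h2
    obtain ⟨i1', e1'⟩ := h1'
    obtain ⟨i2', e2'⟩ := h2'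
    by_cases hp : pu = pv
    · exfalso
      subst hp
      exact hne (by rw [e1, e2])
    · have hb : bw = bw' := line_unique hLS hp i1 i2 i1' i2'
      subst hb
      have hl : lw = lw' := smul_left_cancel _ (e1.symm.trans e1')
      rw [hl]

end MHelpers

/-- main theorem: over a linear space, 𝔐(Γ,φ) is a generalized
quadrangle iff every `ρ_{b,p,λ} : P_b → Λ` (for `p` not on `b`) is a bijection. -/
theorem MStruct_isGQ_iff_rho_bijective {P B G Λ : Type*} [Group G] [MulAction G Λ]
    [Nonempty Λ] (S : IncStruct P B) (φ : B → P → G) (hLS : S.IsLinearSpace) :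
    (MStruct S φ Λ).IsGQ ↔
      ∀ (p : P) (b : B), ¬ S.inc p b → ∀ lam : Λ,
        Function.Bijective (fun q : {q : P // S.inc q b} => rho S φ b p q.1 • lam) := by
  constructor
  · rintro ⟨hd4, huniq⟩ p b hpb lam
    have hd3 : ∀ μ : Λ, (MStruct S φ Λ).dist (Sum.inl (Sum.inr (b, lam)))
        (Sum.inr (p, μ)) = 3 := by
      intro μ
      refine IncStruct.dist_eq_three (hd4 _ _) (by simp) ?_
      rw [madj_yz]
      rintro ⟨h, -⟩
      exact hpb h
    constructor
    · rintro ⟨q, hq⟩ ⟨q', hq'⟩ he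
      have he' : rho S φ b p q • lam = rho S φ b p q' • lam := he
      obtain ⟨w, hw⟩ := chain3_of_rho (φ := φ) hLS hpb hq lam
      obtain ⟨w', hw'⟩ := chain3_of_rho (φ := φ) hLS hpb hq' lam
      rw [he'] at hw
      obtain ⟨cu, -, hcu⟩ := huniq _ _ 3 (by norm_num) (by
        exact_mod_cast hd3 (rho S φ b p q' • lam))
      have h1 := (hcu _ hw).trans (hcu _ hw').symm
      have h2 := congrArg (fun L : List ((P ⊕ B × Λ) ⊕ P × Λ) => L[1]?) h1
      simp only [List.getElem?_cons_succ, List.getElem?_cons_zero, Option.some.injEq,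
        Sum.inr.injEq, Prod.mk.injEq] at h2
      exact Subtype.ext h2.1
    · intro μ
      obtain ⟨cu, hcu, -⟩ := huniq _ _ 3 (by norm_num) (by exact_mod_cast hd3 μ)
      obtain ⟨q, d, hqb, -, -, hrho, -⟩ := decode3 hLS hpb hcu
      exact ⟨⟨q, hqb⟩, hrho⟩
  · intro hbij
    -- the key uniqueness lemma for 3-chains from a point to a line
    have eu3 : ∀ (pt : P ⊕ B × Λ) (p : P) (μ : Λ),
        (MStruct S φ Λ).dist (Sum.inl pt) (Sum.inr (p, μ)) = ((3 : ℕ) : ℕ∞) →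
        ∃! c, (MStruct S φ Λ).IsNChain 3 (Sum.inl pt) (Sum.inr (p, μ)) c := by
      intro pt p μ hd3
      have hnetop : (MStruct S φ Λ).dist (Sum.inl pt) (Sum.inr (p, μ)) ≠ ⊤ := by
        rw [hd3]; simp
      obtain ⟨k', c, hd', hc⟩ := IncStruct.exists_chain_dist hnetop
      have hk' : k' = 3 := by rw [hd3] at hd'; exact_mod_cast hd'.symm
      subst hk'
      have hnadj : ¬ (MStruct S φ Λ).adj (Sum.inl pt) (Sum.inr (p, μ)) := by
        intro h
        have h1 := IncStruct.dist_le (IncStruct.mk1 h)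
        rw [hd3] at h1
        exact absurd h1 (by norm_num)
      rcases pt with q | ⟨b, l⟩
      · -- from x_q
        have hqp : q ≠ p := fun h => hnadj (madj_xz.mpr h)
        refine ⟨c, hc, fun c' hc' => ?_⟩
        obtain ⟨d, l2, hpd, hqd, hμ, hsh⟩ := decodeX hLS hqp hc
        obtain ⟨d', l2', hpd', hqd', hμ', hsh'⟩ := decodeX hLS hqp hc'
        have hdd : d' = d := line_unique hLS hqp.symm hpd' hqd' hpd hqd
        subst hdd
        have hl : l2' = l2 := smul_left_cancel _ (hμ'.symm.trans hμ)
        rw [hsh, hsh', hl]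
      · -- from y_{b,l}
        by_cases hpb : S.inc p b
        · have hμne : μ ≠ φ b p • l := fun h => hnadj (madj_yz.mpr ⟨hpb, h⟩)
          refine ⟨c, hc, fun c' hc' => ?_⟩
          rw [decodeY_incl hLS hpb hμne hc', decodeY_incl hLS hpb hμne hc]
        · refine ⟨c, hc, fun c' hc' => ?_⟩
          obtain ⟨q, d, hqb, hpd, hqd, hrho, hsh⟩ := decode3 hLS hpb hc
          obtain ⟨q', d', hqb', hpd', hqd', hrho', hsh'⟩ := decode3 hLS hpb hc'
          have hinj := (hbij p b hpb l).1
          have hqq : (⟨q', hqb'⟩ : {q : P // S.inc q b}) = ⟨q, hqb⟩ := hinj (by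
            show rho S φ b p q' • l = rho S φ b p q • l
            rw [hrho, hrho'])
          have hq : q' = q := congrArg Subtype.val hqq
          subst hq
          have hd : d' = d :=
            line_unique hLS (fun h => hpb (by rw [h]; exact hqb)) hpd' hqd' hpd hqd
          subst hd
          rw [hsh, hsh']
    constructor
    · -- diameter at most 4
      have l₀ : Λ := Classical.arbitrary Λ
      have h_xx : ∀ p q : P,
          (MStruct S φ Λ).dist (Sum.inl (Sum.inl p)) (Sum.inl (Sum.inl q)) ≤ 4 := by
        intro p q
        by_cases hpq : p = q
        · subst hpq
          exact le_trans (IncStruct.dist_le (IncStruct.mk0 _)) (by norm_num)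
        · obtain ⟨b, ⟨hpb, hqb⟩, -⟩ := hLS.1 p q hpq
          refine le_trans (IncStruct.dist_le (IncStruct.mk4 (w1 := Sum.inr (p, φ b p • l₀))
            (w2 := Sum.inl (Sum.inr (b, l₀))) (w3 := Sum.inr (q, φ b q • l₀))
            ?_ ?_ ?_ ?_)) (by norm_num)
          · exact madj_xz.mpr rfl
          · exact madj_zy.mpr ⟨hpb, rfl⟩
          · exact madj_yz.mpr ⟨hqb, rfl⟩
          · exact madj_zx.mpr rfl
      have h_xy : ∀ (p : P) (b : B) (l : Λ),
          (MStruct S φ Λ).dist (Sum.inl (Sum.inl p)) (Sum.inl (Sum.inr (b, l))) ≤ 4 := by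
        intro p b l
        by_cases hpb : S.inc p b
        · refine le_trans (IncStruct.dist_le (IncStruct.mk2 (w := Sum.inr (p, φ b p • l))
            ?_ ?_)) (by norm_num)
          · exact madj_xz.mpr rfl
          · exact madj_zy.mpr ⟨hpb, rfl⟩
        · obtain ⟨q1, q2, hne, hq1, hq2⟩ := hLS.2.1 b
          have hpq : p ≠ q1 := fun h => hpb (h ▸ hq1)
          obtain ⟨d, ⟨hpd, hqd⟩, -⟩ := hLS.1 p q1 hpq
          refine le_trans (IncStruct.dist_le (IncStruct.mk4
            (w1 := Sum.inr (p, φ d p • ((φ d q1)⁻¹ • (φ b q1 • l))))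
            (w2 := Sum.inl (Sum.inr (d, (φ d q1)⁻¹ • (φ b q1 • l))))
            (w3 := Sum.inr (q1, φ b q1 • l)) ?_ ?_ ?_ ?_)) (by norm_num)
          · exact madj_xz.mpr rfl
          · exact madj_zy.mpr ⟨hpd, rfl⟩
          · exact madj_yz.mpr ⟨hqd, (smul_inv_smul _ _).symm⟩
          · exact madj_zy.mpr ⟨hq1, rfl⟩
      have h_xz : ∀ (q p : P) (μ : Λ),
          (MStruct S φ Λ).dist (Sum.inl (Sum.inl q)) (Sum.inr (p, μ)) ≤ 4 := by
        intro q p μ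
        by_cases hqp : q = p
        · exact le_trans (IncStruct.dist_le (IncStruct.mk1 (madj_xz.mpr hqp)))
            (by norm_num)
        · obtain ⟨d, ⟨hpd, hqd⟩, -⟩ := hLS.1 p q (Ne.symm hqp)
          refine le_trans (IncStruct.dist_le (IncStruct.mk3
            (w1 := Sum.inr (q, φ d q • ((φ d p)⁻¹ • μ)))
            (w2 := Sum.inl (Sum.inr (d, (φ d p)⁻¹ • μ))) ?_ ?_ ?_)) (by norm_num)
          · exact madj_xz.mpr rfl
          · exact madj_zy.mpr ⟨hqd, rfl⟩
          · exact madj_yz.mpr ⟨hpd, (smul_inv_smul _ _).symm⟩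
      have h_yz : ∀ (b : B) (l : Λ) (p : P) (μ : Λ),
          (MStruct S φ Λ).dist (Sum.inl (Sum.inr (b, l))) (Sum.inr (p, μ)) ≤ 4 := by
        intro b l p μ
        by_cases hpb : S.inc p b
        · refine le_trans (IncStruct.dist_le (IncStruct.mk3
            (w1 := Sum.inr (p, φ b p • l)) (w2 := Sum.inl (Sum.inl p))
            ?_ ?_ ?_)) (by norm_num)
          · exact madj_yz.mpr ⟨hpb, rfl⟩
          · exact madj_zx.mpr rfl
          · exact madj_xz.mpr rfl
        · obtain ⟨⟨q, hq⟩, hrho⟩ := (hbij p b hpb l).2 μ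
          have hrho' : rho S φ b p q • l = μ := hrho
          obtain ⟨w, hw⟩ := chain3_of_rho (φ := φ) hLS hpb hq l
          rw [hrho'] at hw
          exact le_trans (IncStruct.dist_le hw) (by norm_num)
      have h_yy : ∀ (b : B) (l : Λ) (b' : B) (l' : Λ),
          (MStruct S φ Λ).dist (Sum.inl (Sum.inr (b, l)))
            (Sum.inl (Sum.inr (b', l'))) ≤ 4 := by
        intro b l b' l'
        by_cases hmeet : ∃ r : P, S.inc r b ∧ S.inc r b'
        · obtain ⟨r, hrb, hrb'⟩ := hmeet
          refine le_trans (IncStruct.dist_le (IncStruct.mk4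
            (w1 := Sum.inr (r, φ b r • l)) (w2 := Sum.inl (Sum.inl r))
            (w3 := Sum.inr (r, φ b' r • l')) ?_ ?_ ?_ ?_)) (by norm_num)
          · exact madj_yz.mpr ⟨hrb, rfl⟩
          · exact madj_zx.mpr rfl
          · exact madj_xz.mpr rfl
          · exact madj_zy.mpr ⟨hrb', rfl⟩
        · obtain ⟨q1, q2, hne12, hq1, hq2⟩ := hLS.2.1 b
          have hpb' : ¬ S.inc q1 b' := fun h => hmeet ⟨q1, hq1, h⟩
          obtain ⟨⟨q, hq⟩, hrho⟩ := (hbij q1 b' hpb' l').2 (φ b q1 • l)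
          have hrho' : rho S φ b' q1 q • l' = φ b q1 • l := hrho
          obtain ⟨w, hw⟩ := chain3_of_rho (φ := φ) hLS hpb' hq l'
          rw [hrho'] at hw
          obtain ⟨-, -, -, hch⟩ := hw
          simp only [List.Chain', List.isChain_cons_cons, List.isChain_singleton, and_true] at hch
          obtain ⟨a1, a2, a3⟩ := hch
          refine le_trans (IncStruct.dist_le (IncStruct.mk4
            (w1 := Sum.inr (q1, φ b q1 • l)) (w2 := w)
            (w3 := Sum.inr (q, φ b' q • l')) ?_ ?_ ?_ ?_)) (by norm_num)
          · exact madj_yz.mpr ⟨hq1, rfl⟩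
          · exact IncStruct.adj_symm a3
          · exact IncStruct.adj_symm a2
          · exact IncStruct.adj_symm a1
      have h_zz : ∀ (p : P) (μ : Λ) (p' : P) (μ' : Λ),
          (MStruct S φ Λ).dist (Sum.inr (p, μ)) (Sum.inr (p', μ')) ≤ 4 := by
        intro p μ p' μ'
        by_cases hpp : p = p'
        · subst hpp
          refine le_trans (IncStruct.dist_le (IncStruct.mk2
            (w := Sum.inl (Sum.inl p)) ?_ ?_)) (by norm_num)
          · exact madj_zx.mpr rfl
          · exact madj_xz.mpr rfl
        · obtain ⟨d, ⟨hpd, hpd'⟩, -⟩ := hLS.1 p p' hpp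
          refine le_trans (IncStruct.dist_le (IncStruct.mk4
            (w1 := Sum.inl (Sum.inr (d, (φ d p)⁻¹ • μ)))
            (w2 := Sum.inr (p', φ d p' • ((φ d p)⁻¹ • μ)))
            (w3 := Sum.inl (Sum.inl p')) ?_ ?_ ?_ ?_)) (by norm_num)
          · exact madj_zy.mpr ⟨hpd, (smul_inv_smul _ _).symm⟩
          · exact madj_yz.mpr ⟨hpd', rfl⟩
          · exact madj_zx.mpr rfl
          · exact madj_xz.mpr rfl
      intro u v
      rcases u with (pu | ⟨bu, lu⟩) | ⟨pu, mu⟩ <;> rcases v with (pv | ⟨bv, lv⟩) | ⟨pv, mv⟩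
      · exact h_xx pu pv
      · exact h_xy pu bv lv
      · exact h_xz pu pv mv
      · rw [IncStruct.dist_comm]; exact h_xy pv bu lu
      · exact h_yy bu lu bv lv
      · exact h_yz bu lu pv mv
      · rw [IncStruct.dist_comm]; exact h_xz pv pu mu
      · rw [IncStruct.dist_comm]; exact h_yz bv lv pu mu
      · exact h_zz pu mu pv mv
    · -- uniqueness of short chains
      intro u v k hk hdist
      have hnetop : (MStruct S φ Λ).dist u v ≠ ⊤ := by rw [hdist]; simp
      obtain ⟨k', c, hd', hc⟩ := IncStruct.exists_chain_dist hnetop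
      have hk' : k' = k := by rw [hdist] at hd'; exact_mod_cast hd'.symm
      subst hk'
      interval_cases k'
      · obtain ⟨hcu, huv⟩ := IncStruct.chain0 hc
        subst huv
        exact ⟨[u], IncStruct.mk0 u, fun c' hc' => (IncStruct.chain0 hc').1⟩
      · obtain ⟨hcu, hadj⟩ := IncStruct.chain1 hc
        exact ⟨[u, v], IncStruct.mk1 hadj, fun c' hc' => (IncStruct.chain1 hc').1⟩
      · have hne2 : u ≠ v := by
          rintro rfl
          have h0 := IncStruct.dist_le (S := MStruct S φ Λ) (IncStruct.mk0 u)
          rw [hdist] at h0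
          exact absurd h0 (by norm_num)
        obtain ⟨w, hsh, a1, a2⟩ := IncStruct.chain2 hc
        refine ⟨c, hc, fun c' hc' => ?_⟩
        obtain ⟨w', hsh', a1', a2'⟩ := IncStruct.chain2 hc'
        rw [hsh, hsh', nbr_unique hLS hne2 a1' a2' a1 a2]
      · obtain ⟨w1, w2, hsh, a1, a2, a3⟩ := IncStruct.chain3 hc
        have e1 := IncStruct.adj_isLeft a1
        have e2 := IncStruct.adj_isLeft a2
        have e3 := IncStruct.adj_isLeft a3
        rcases u with pt | ⟨p, μ⟩
        · rcases v with pt' | ⟨p, μ⟩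
          · exfalso; rcases w1 with w1 | w1 <;> rcases w2 with w2 | w2 <;> simp_all
          · exact eu3 pt p μ hdist
        · rcases v with pt' | ln'
          · exact IncStruct.existsUnique_rev
              (eu3 pt' p μ ((IncStruct.dist_comm _ _).trans hdist))
          · exfalso; rcases w1 with w1 | w1 <;> rcases w2 with w2 | w2 <;> simp_all
end

section
/- Let (Γ,φ) be an incidence gain graph whose underlying incidence structure (P,B,I) is a linear space, with gain group acting on a nonempty set Λ. If 𝔐(Γ,φ) is a generalized quadrangle, then for every line b ∈ B, the set P_b of points incident with b has the same cardinality as Λ; in particular, all lines of (P,B,I) have the same number of points, so (P,B,I) is a Steiner system S(2,v,k). -/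
open Classical

section AuxLemmas

lemma exists_not_inc {P B : Type*} {S : IncStruct P B} (hLS : S.IsLinearSpace) (b : B) :
    ∃ p : P, ¬ S.inc p b := by
  by_contra h
  push_neg at h
  obtain ⟨p₀, b₀, hnb⟩ := hLS.2.2
  obtain ⟨x, y, hxy, hx, hy⟩ := hLS.2.1 b₀
  obtain ⟨c, -, hc⟩ := hLS.1 x y hxy
  have h1 : b₀ = b := (hc b₀ ⟨hx, hy⟩).trans (hc b ⟨h x, h y⟩).symm
  rw [h1] at hnb
  exact hnb (h p₀)

lemma three_le_of_chain {P' B' : Type*} (M : IncStruct P' B') {a : P'} {z : B'}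
    (hni : ¬ M.inc a z) {k : ℕ} {c : List (P' ⊕ B')}
    (hc : M.IsNChain k (Sum.inl a) (Sum.inr z) c) : 3 ≤ k ∧ k ≠ 4 := by
  obtain ⟨hlen, hh, hl, hch⟩ := hc
  constructor
  · by_contra hk
    push_neg at hk
    interval_cases k
    · rcases c with _|⟨x0,_|⟨x1,c⟩⟩ <;> simp_all [IncStruct.adj]
    · rcases c with _|⟨x0,_|⟨x1,_|⟨x2,c⟩⟩⟩ <;> simp_all [IncStruct.adj, List.Chain', List.isChain_cons_cons, List.isChain_singleton]
    · rcases c with _|⟨x0,_|⟨x1,_|⟨x2,_|⟨x3,c⟩⟩⟩⟩ <;>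
        (try rcases x1 with q1|l1) <;> simp_all [IncStruct.adj, List.Chain', List.isChain_cons_cons, List.isChain_singleton]
  · rintro rfl
    rcases c with _|⟨x0,_|⟨x1,_|⟨x2,_|⟨x3,_|⟨x4,_|⟨x5,c⟩⟩⟩⟩⟩⟩ <;>
      (try rcases x1 with q1|l1) <;> (try rcases x2 with q2|l2) <;>
      (try rcases x3 with q3|l3) <;> simp_all [IncStruct.adj, List.Chain', List.isChain_cons_cons, List.isChain_singleton]

lemma dist_eq_three' {P' B' : Type*} (M : IncStruct P' B') {a : P'} {z : B'}
    (hni : ¬ M.inc a z) (hle : M.dist (Sum.inl a) (Sum.inr z) ≤ 4) :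
    M.dist (Sum.inl a) (Sum.inr z) = 3 := by
  have hSne : {n : ℕ∞ | ∃ (k : ℕ) (c : List (P' ⊕ B')), n = (k : ℕ∞) ∧
      M.IsNChain k (Sum.inl a) (Sum.inr z) c}.Nonempty := by
    by_contra h
    rw [Set.not_nonempty_iff_eq_empty] at h
    rw [IncStruct.dist, h, sInf_empty] at hle
    simp at hle
  obtain ⟨n, hn⟩ := hSne
  obtain ⟨k, c, rfl, hc⟩ := hn
  have hT : {k : ℕ | ∃ c, M.IsNChain k (Sum.inl a) (Sum.inr z) c}.Nonempty := ⟨k, c, hc⟩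
  obtain ⟨c₀, hc₀⟩ := Nat.sInf_mem hT
  have hdist : M.dist (Sum.inl a) (Sum.inr z) =
      ((sInf {k : ℕ | ∃ c, M.IsNChain k (Sum.inl a) (Sum.inr z) c} : ℕ) : ℕ∞) := by
    apply le_antisymm
    · refine sInf_le ?_
      exact ⟨_, c₀, rfl, hc₀⟩
    · apply le_sInf
      rintro n ⟨k', c', rfl, hc'⟩
      have hk' : sInf {k : ℕ | ∃ c, M.IsNChain k (Sum.inl a) (Sum.inr z) c} ≤ k' :=
        Nat.sInf_le ⟨c', hc'⟩
      exact_mod_cast hk'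
  have h3 := three_le_of_chain M hni hc₀
  rw [hdist] at hle ⊢
  have h4 : sInf {k : ℕ | ∃ c, M.IsNChain k (Sum.inl a) (Sum.inr z) c} ≤ 4 := by
    exact_mod_cast hle
  have h5 : sInf {k : ℕ | ∃ c, M.IsNChain k (Sum.inl a) (Sum.inr z) c} = 3 := by omega
  rw [h5]
  rfl

end AuxLemmas

/-- if 𝔐(Γ,φ) is a generalized quadrangle, then every line `b` of the
linear space has point set `P_b` of the same cardinality as `Λ`; in particular all
lines have equally many points, so `(P,B,I)` is a Steiner system `S(2,v,k)`. -/
theorem lines_equinumerous_with_Lambda {P B G Λ : Type*} [Group G] [MulAction G Λ]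
    [Nonempty Λ] (S : IncStruct P B) (φ : B → P → G) (hLS : S.IsLinearSpace)
    (hGQ : (MStruct S φ Λ).IsGQ) :
    (∀ b : B, Nonempty ({q : P // S.inc q b} ≃ Λ)) ∧
    ∀ b b' : B, Nonempty ({q : P // S.inc q b} ≃ {q : P // S.inc q b'}) := by
  have key : ∀ b : B, Nonempty ({q : P // S.inc q b} ≃ Λ) := by
    intro b
    obtain ⟨p, hp⟩ := exists_not_inc hLS b
    obtain ⟨l₀⟩ := ‹Nonempty Λ›
    set M := MStruct S φ Λ with hM
    set u : (P ⊕ B × Λ) ⊕ (P × Λ) := Sum.inl (Sum.inr (b, l₀)) with hu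
    have hline : ∀ q : P, S.inc q b → ∃ b' : B, S.inc p b' ∧ S.inc q b' := by
      intro q hq
      have hpq : p ≠ q := fun h => hp (h ▸ hq)
      obtain ⟨b', hb', -⟩ := hLS.1 p q hpq
      exact ⟨b', hb'⟩
    set f : {q : P // S.inc q b} → Λ := fun q => rho S φ b p q.1 • l₀ with hf
    have hnotinc : ∀ μ : Λ, ¬ M.inc (Sum.inr (b, l₀)) (p, μ) := fun μ h => hp h.1
    -- the explicit 3-chain through q
    have chain : ∀ q : {q : P // S.inc q b},
        M.IsNChain 3 u (Sum.inr (p, f q))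
          [u, Sum.inr (q.1, φ b q.1 • l₀),
           Sum.inl (Sum.inr ((hline q.1 q.2).choose,
             (φ (hline q.1 q.2).choose q.1)⁻¹ • (φ b q.1 • l₀))),
           Sum.inr (p, f q)] := by
      rintro ⟨q, hq⟩
      obtain ⟨hb'p, hb'q⟩ := (hline q hq).choose_spec
      refine ⟨rfl, rfl, by simp, ?_⟩
      simp only [List.Chain', List.isChain_cons_cons, List.isChain_singleton, and_true]
      refine ⟨⟨hq, rfl⟩, ⟨hb'q, (smul_inv_smul _ _).symm⟩, ⟨hb'p, ?_⟩⟩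
      show rho S φ b p q • l₀ = _
      rw [rho, dif_pos (hline q hq), mul_smul, mul_smul]
    have hge : ∀ μ : Λ, (3 : ℕ∞) ≤ M.dist u (Sum.inr (p, μ)) := by
      intro μ
      apply le_sInf
      rintro n ⟨k, c, rfl, hc⟩
      have h3 := (three_le_of_chain M (hnotinc μ) hc).1
      exact_mod_cast h3
    have hdist3 : ∀ q : {q : P // S.inc q b}, M.dist u (Sum.inr (p, f q)) = 3 := by
      intro q
      refine le_antisymm ?_ (hge _)
      have : M.dist u (Sum.inr (p, f q)) ≤ ((3 : ℕ) : ℕ∞) := by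
        refine sInf_le ?_
        exact ⟨3, _, rfl, chain q⟩
      exact_mod_cast this
    have hinj : Function.Injective f := by
      rintro q₁ q₂ hfe
      obtain ⟨c, -, hun⟩ := hGQ.2 u (Sum.inr (p, f q₁)) 3 (by norm_num) (hdist3 q₁)
      have e1 := hun _ (chain q₁)
      have hch2 := chain q₂
      rw [← hfe] at hch2
      have e2 := hun _ hch2
      have heq := e1.trans e2.symm
      simp only [List.cons.injEq, Sum.inr.injEq, Prod.mk.injEq] at heq
      exact Subtype.ext heq.2.1.1
    have hsurj : Function.Surjective f := by
      intro μ
      have h3 : M.dist u (Sum.inr (p, μ)) = 3 := dist_eq_three' M (hnotinc μ) (hGQ.1 _ _)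
      obtain ⟨c, hc, -⟩ := hGQ.2 u (Sum.inr (p, μ)) 3 (by norm_num) h3
      obtain ⟨hlen, hh, hl, hch⟩ := hc
      obtain ⟨x0, x1, x2, x3, rfl⟩ : ∃ a b c' d, c = [a, b, c', d] := by
        clear hh hl hch
        rcases c with _|⟨a,_|⟨b,_|⟨c,_|⟨d,_|⟨e,l⟩⟩⟩⟩⟩ <;> simp_all
      simp only [List.head?_cons, Option.some.injEq] at hh
      have hl' : x3 = Sum.inr (p, μ) := by simpa using hl
      subst hh hl'
      simp only [List.Chain', List.isChain_cons_cons, List.isChain_singleton, and_true] at hch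
      obtain ⟨h01, h12, h23⟩ := hch
      rcases x1 with pt1|⟨p', ν⟩
      · exact absurd h01 (by simp [IncStruct.adj])
      · have h01' : S.inc p' b ∧ ν = φ b p' • l₀ := h01
        rcases x2 with pt2|ln2
        · rcases pt2 with q'|⟨b'', l''⟩
          · have h12' : q' = p' := h12
            have h23' : q' = p := h23
            rw [h23'] at h12'
            rw [← h12'] at h01'
            exact absurd h01'.1 hp
          · have h12' : S.inc p' b'' ∧ ν = φ b'' p' • l'' := h12
            have h23' : S.inc p b'' ∧ μ = φ b'' p • l'' := h23
            refine ⟨⟨p', h01'.1⟩, ?_⟩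
            have hne : p ≠ p' := fun h => hp (h ▸ h01'.1)
            obtain ⟨bb, -, hbb⟩ := hLS.1 p p' hne
            obtain ⟨hc1, hc2⟩ := (hline p' h01'.1).choose_spec
            have hbeq : (hline p' h01'.1).choose = b'' :=
              (hbb _ ⟨hc1, hc2⟩).trans (hbb b'' ⟨h23'.1, h12'.1⟩).symm
            show rho S φ b p p' • l₀ = μ
            rw [rho, dif_pos (hline p' h01'.1), hbeq, mul_smul, mul_smul]
            rw [← h01'.2, h12'.2, inv_smul_smul, ← h23'.2]
        · exact absurd h12 (by simp [IncStruct.adj])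
    exact ⟨Equiv.ofBijective f ⟨hinj, hsurj⟩⟩
  refine ⟨key, fun b b' => ?_⟩
  obtain ⟨e⟩ := key b
  obtain ⟨e'⟩ := key b'
  exact ⟨e.trans e'.symm⟩
end

section
/- Let (Γ,φ) be an incidence gain graph whose underlying incidence structure (P,B,I) is a linear space with finite point set P, with gain group acting on a nonempty set Λ, and suppose 𝔐(Γ,φ) is a generalized quadrangle. Then Λ is finite, |P| = v ≥ 3, |Λ| = k ≥ 2, every line of 𝔐(Γ,φ) is incident with exactly 1 + (v-1)/(k-1) points, and every point of 𝔐(Γ,φ) is incident with exactly k lines. -/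
open Classical

section Aux

namespace IncStruct

variable {X Y : Type*} (S : IncStruct X Y)

lemma adj_isLeft' {a b : X ⊕ Y} (h : S.adj a b) : a.isLeft = !b.isLeft := by
  cases a <;> cases b <;> simp [adj] at h ⊢

lemma adj_inl' {p : X} {a : X ⊕ Y} (h : S.adj (Sum.inl p) a) :
    ∃ z, a = Sum.inr z ∧ S.inc p z := by
  cases a with
  | inl q => exact absurd h (by simp [adj])
  | inr z => exact ⟨z, rfl, h⟩

lemma adj_inr' {z : Y} {a : X ⊕ Y} (h : S.adj (Sum.inr z) a) :
    ∃ p, a = Sum.inl p ∧ S.inc p z := by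
  cases a with
  | inl q => exact ⟨q, rfl, h⟩
  | inr w => exact absurd h (by simp [adj])

lemma chain_parity' : ∀ (c : List (X ⊕ Y)) (k : ℕ) (u v : X ⊕ Y),
    S.IsNChain k u v c → (u.isLeft = v.isLeft ↔ Even k) := by
  intro c
  induction c with
  | nil => intro k u v h; simp [IsNChain] at h
  | cons a t ih =>
    intro k u v h
    obtain ⟨hl, hh, hg, hc⟩ := h
    have hu : a = u := by simpa using hh
    cases t with
    | nil =>
      have hk : k = 0 := by simpa using hl.symm
      have hv : a = v := by simpa using hg
      subst hu; subst hv; subst hk; simp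
    | cons b t' =>
      have hadj : S.adj a b := (List.isChain_cons_cons.mp hc).1
      have h2 : S.IsNChain t'.length b v (b :: t') :=
        ⟨by simp, by simp, by simpa [List.getLast?_cons_cons] using hg,
          (List.isChain_cons_cons.mp hc).2⟩
      have hk : k = t'.length + 1 := by simp at hl; omega
      have hside := S.adj_isLeft' hadj
      have ihh := ih t'.length b v h2
      subst hu
      rw [hk, Nat.even_add_one, ← ihh, hside]
      cases b.isLeft <;> cases v.isLeft <;> simp

lemma dist_le_of_chain' {k : ℕ} {u v : X ⊕ Y} {c : List (X ⊕ Y)}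
    (h : S.IsNChain k u v c) : S.dist u v ≤ k :=
  sInf_le ⟨k, c, rfl, h⟩

lemma exists_min_chain' {u v : X ⊕ Y} (h : S.dist u v ≠ ⊤) :
    ∃ (k : ℕ) (c : List (X ⊕ Y)), S.dist u v = k ∧ S.IsNChain k u v c := by
  have hne : {n : ℕ∞ | ∃ (k : ℕ) (c : List (X ⊕ Y)),
      n = (k : ℕ∞) ∧ S.IsNChain k u v c}.Nonempty := by
    by_contra hemp
    rw [Set.not_nonempty_iff_eq_empty] at hemp
    exact h (by simp only [dist, hemp, sInf_empty])
  have hKne : {k : ℕ | ∃ c, S.IsNChain k u v c}.Nonempty := by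
    obtain ⟨n, k, c, rfl, hc⟩ := hne; exact ⟨k, c, hc⟩
  have hm := Nat.sInf_mem hKne
  rw [Set.mem_setOf_eq] at hm
  obtain ⟨c, hc⟩ := hm
  refine ⟨_, c, ?_, hc⟩
  apply le_antisymm
  · exact sInf_le ⟨_, c, rfl, hc⟩
  · apply le_sInf
    rintro n ⟨k, c', rfl, hc'⟩
    have hk : k ∈ {k : ℕ | ∃ c, S.IsNChain k u v c} := ⟨c', hc'⟩
    exact_mod_cast Nat.sInf_le hk

lemma length_eq_two' {α : Type*} {l : List α} (h : l.length = 2) : ∃ a b, l = [a, b] := by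
  rcases l with _ | ⟨a, l⟩
  · simp at h
  rcases l with _ | ⟨b, l⟩
  · simp at h
  rcases l with _ | ⟨c, l⟩
  · exact ⟨a, b, rfl⟩
  · simp at h

lemma length_eq_four' {α : Type*} {l : List α} (h : l.length = 4) :
    ∃ a b c d, l = [a, b, c, d] := by
  rcases l with _ | ⟨a, l⟩
  · simp at h
  rcases l with _ | ⟨b, l⟩
  · simp at h
  rcases l with _ | ⟨c, l⟩
  · simp at h
  rcases l with _ | ⟨d, l⟩
  · simp at h
  rcases l with _ | ⟨e, l⟩
  · exact ⟨a, b, c, d, rfl⟩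
  · simp at h

lemma chain_one' {u v : X ⊕ Y} {c : List (X ⊕ Y)} (h : S.IsNChain 1 u v c) :
    S.adj u v := by
  obtain ⟨hl, hh, hg, hc⟩ := h
  obtain ⟨a, b, rfl⟩ := length_eq_two' hl
  have ha : a = u := by simpa using hh
  have hb : b = v := by simpa using hg
  subst ha; subst hb
  exact (List.isChain_cons_cons.mp hc).1

lemma mk_chain3' {u z1 w1 v : X ⊕ Y} (h1 : S.adj u z1) (h2 : S.adj z1 w1)
    (h3 : S.adj w1 v) : S.IsNChain 3 u v [u, z1, w1, v] :=
  ⟨rfl, rfl, by simp, by simp [List.Chain', List.isChain_cons_cons, h1, h2, h3]⟩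

lemma chain3_decomp' {u v : X ⊕ Y} {c : List (X ⊕ Y)} (h : S.IsNChain 3 u v c) :
    ∃ a b, c = [u, a, b, v] ∧ S.adj u a ∧ S.adj a b ∧ S.adj b v := by
  obtain ⟨hl, hh, hg, hc⟩ := h
  obtain ⟨a, b, c', d, rfl⟩ := length_eq_four' hl
  have ha : a = u := by simpa using hh
  have hd : d = v := by simpa using hg
  subst ha; subst hd
  simp only [List.Chain', List.isChain_cons_cons, List.isChain_singleton, and_true] at hc
  exact ⟨b, c', rfl, hc.1, hc.2.1, hc.2.2⟩

lemma dist_point_line' (hGQ : S.IsGQ) {p : X} {z : Y} (h : ¬ S.inc p z) :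
    S.dist (Sum.inl p) (Sum.inr z) = 3 := by
  have h4 := hGQ.1 (Sum.inl p) (Sum.inr z)
  have hnt : S.dist (Sum.inl p) (Sum.inr z) ≠ ⊤ := by
    intro ht; rw [ht] at h4; exact absurd h4 (by norm_num)
  obtain ⟨k, c, hd, hc⟩ := S.exists_min_chain' hnt
  have hk4 : k ≤ 4 := by rw [hd] at h4; exact_mod_cast h4
  have hp := S.chain_parity' c k _ _ hc
  simp at hp
  have hk1 : k ≠ 1 := by
    intro h1
    subst h1
    exact h (S.chain_one' hc)
  have h2 : k % 2 = 1 := Nat.odd_iff.mp hp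
  have : k = 3 := by omega
  rw [hd, this]
  rfl

lemma meet_exists_unique' (hGQ : S.IsGQ) {u w : X}
    (hnc : ∀ z : Y, ¬ (S.inc u z ∧ S.inc w z)) (z : Y) (hz : S.inc u z) :
    ∃! z' : Y, S.inc w z' ∧ ∃ x : X, S.inc x z' ∧ S.inc x z := by
  have hwz : ¬ S.inc w z := fun hh => hnc z ⟨hz, hh⟩
  obtain ⟨c, hc, huniq⟩ :=
    hGQ.2 (Sum.inl w) (Sum.inr z) 3 (by norm_num) (S.dist_point_line' hGQ hwz)
  obtain ⟨e1, e2, rfl, h1, h2, h3⟩ := S.chain3_decomp' hc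
  obtain ⟨z1, rfl, hwz1⟩ := S.adj_inl' h1
  obtain ⟨x1, rfl, hx1z1⟩ := S.adj_inr' h2
  have hx1z : S.inc x1 z := h3
  refine ⟨z1, ⟨hwz1, x1, hx1z1, hx1z⟩, ?_⟩
  rintro z' ⟨hwz', x, hxz', hxz⟩
  have hch : S.IsNChain 3 (Sum.inl w) (Sum.inr z)
      [Sum.inl w, Sum.inr z', Sum.inl x, Sum.inr z] :=
    S.mk_chain3' hwz' hxz' hxz
  have heq := huniq _ hch
  simp only [List.cons.injEq, Sum.inr.injEq] at heq
  exact heq.2.1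

lemma pencil_equiv' (hGQ : S.IsGQ) {u w : X}
    (hnc : ∀ z : Y, ¬ (S.inc u z ∧ S.inc w z)) :
    Nonempty ({z : Y // S.inc u z} ≃ {z : Y // S.inc w z}) := by
  have hA : ∀ z : {z : Y // S.inc u z},
      ∃! z' : Y, S.inc w z' ∧ ∃ x, S.inc x z' ∧ S.inc x z.1 :=
    fun z => S.meet_exists_unique' hGQ hnc z.1 z.2
  have hB : ∀ z : {z : Y // S.inc w z},
      ∃! z' : Y, S.inc u z' ∧ ∃ x, S.inc x z' ∧ S.inc x z.1 :=
    fun z => S.meet_exists_unique' hGQ (fun z h => hnc z ⟨h.2, h.1⟩) z.1 z.2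
  choose f hf hfu using hA
  choose g hg hgu using hB
  refine ⟨⟨fun z => ⟨f z, (hf z).1⟩, fun z => ⟨g z, (hg z).1⟩, ?_, ?_⟩⟩
  · intro z
    apply Subtype.ext
    have hx := (hf z).2
    obtain ⟨x, hx1, hx2⟩ := hx
    exact (hgu ⟨f z, (hf z).1⟩ z.1 ⟨z.2, x, hx2, hx1⟩).symm
  · intro z
    apply Subtype.ext
    have hx := (hg z).2
    obtain ⟨x, hx1, hx2⟩ := hx
    exact (hfu ⟨g z, (hg z).1⟩ z.1 ⟨z.2, x, hx2, hx1⟩).symm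

end IncStruct

end Aux

/-- if `P` is finite and 𝔐(Γ,φ) is a generalized quadrangle, then `Λ`
is finite, `v = |P| ≥ 3`, `k = |Λ| ≥ 2`, every line of 𝔐(Γ,φ) has exactly
`1 + (v-1)/(k-1)` points, and every point of 𝔐(Γ,φ) lies on exactly `k` lines. -/
theorem finite_parameters {P B G Λ : Type*} [Group G] [MulAction G Λ] [Nonempty Λ]
    [Finite P] (S : IncStruct P B) (φ : B → P → G) (hLS : S.IsLinearSpace)
    (hGQ : (MStruct S φ Λ).IsGQ) :
    Finite Λ ∧ 3 ≤ Nat.card P ∧ 2 ≤ Nat.card Λ ∧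
    (∀ z : P × Λ,
      Nat.card {u : P ⊕ B × Λ // (MStruct S φ Λ).inc u z} =
        1 + (Nat.card P - 1) / (Nat.card Λ - 1)) ∧
    ∀ u : P ⊕ B × Λ,
      Nat.card {z : P × Λ // (MStruct S φ Λ).inc u z} = Nat.card Λ := by
  classical
  set M := MStruct S φ Λ with hM
  obtain ⟨hLS1, hLS2, p₀, b₀, hp₀⟩ := hLS
  obtain ⟨q₀, r₀, hqr, hqb₀, hrb₀⟩ := hLS2 b₀
  have exists_off : ∀ b : B, ∃ p : P, ¬ S.inc p b := by
    intro b
    by_contra hall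
    push_neg at hall
    have := (hLS1 q₀ r₀ hqr).unique ⟨hall q₀, hall r₀⟩ ⟨hqb₀, hrb₀⟩
    exact hp₀ (by rw [← this]; exact hall p₀)
  obtain ⟨l₀⟩ := ‹Nonempty Λ›
  have pencil1 : ∀ p : P, Nonempty ({z : P × Λ // M.inc (Sum.inl p) z} ≃ Λ) := by
    intro p
    refine ⟨⟨fun z => z.1.2, fun l => ⟨(p, l), rfl⟩, ?_, ?_⟩⟩
    · rintro ⟨⟨q, l⟩, hq⟩
      have hpq : p = q := hq
      subst hpq
      rfl
    · intro l; rfl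
  have pencil2 : ∀ (b : B) (l : Λ),
      Nonempty ({z : P × Λ // M.inc (Sum.inr (b, l)) z} ≃ {q : P // S.inc q b}) := by
    intro b l
    refine ⟨⟨fun z => ⟨z.1.1, z.2.1⟩, fun q => ⟨(q.1, φ b q.1 • l), ⟨q.2, rfl⟩⟩, ?_, ?_⟩⟩
    · rintro ⟨⟨q, m⟩, hq, hm⟩
      subst hm
      rfl
    · intro q; rfl
  have hnc : ∀ (p : P) (b : B), ¬ S.inc p b → ∀ (l : Λ) (z : P × Λ),
      ¬ (M.inc (Sum.inl p) z ∧ M.inc (Sum.inr (b, l)) z) := by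
    rintro p b hpb l ⟨q, m⟩ ⟨h1, h2, h3⟩
    exact hpb (by rw [h1]; exact h2)
  have key : ∀ b : B, Nonempty (Λ ≃ {q : P // S.inc q b}) := by
    intro b
    obtain ⟨p, hpb⟩ := exists_off b
    obtain ⟨e⟩ := M.pencil_equiv' hGQ (hnc p b hpb l₀)
    obtain ⟨e1⟩ := pencil1 p
    obtain ⟨e2⟩ := pencil2 b l₀
    exact ⟨e1.symm.trans (e.trans e2)⟩
  have hFinΛ : Finite Λ := Finite.of_equiv _ (key b₀).some.symm
  have hk : ∀ b : B, Nat.card {q : P // S.inc q b} = Nat.card Λ := fun b =>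
    (Nat.card_congr (key b).some).symm
  have hk2 : 2 ≤ Nat.card Λ := by
    rw [← hk b₀]
    have : Nontrivial {q : P // S.inc q b₀} :=
      ⟨⟨⟨q₀, hqb₀⟩, ⟨r₀, hrb₀⟩, fun h => hqr (congrArg Subtype.val h)⟩⟩
    exact Finite.one_lt_card_iff_nontrivial.mpr this
  have hv3 : 3 ≤ Nat.card P := by
    letI := Fintype.ofFinite P
    rw [Nat.card_eq_fintype_card]
    have hpq : p₀ ≠ q₀ := fun h => hp₀ (by rw [h]; exact hqb₀)
    have hpr : p₀ ≠ r₀ := fun h => hp₀ (by rw [h]; exact hrb₀)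
    have hcard : ({p₀, q₀, r₀} : Finset P).card = 3 := by
      rw [Finset.card_insert_of_notMem (by simp [hpq, hpr]),
        Finset.card_insert_of_notMem (by simp [hqr]), Finset.card_singleton]
    calc 3 = ({p₀, q₀, r₀} : Finset P).card := hcard.symm
      _ ≤ Finset.univ.card := Finset.card_le_card (Finset.subset_univ _)
      _ = Fintype.card P := Finset.card_univ
  have hFinB : Finite B := by
    have hinj : Function.Injective (fun b : B =>
        (((hLS2 b).choose, (hLS2 b).choose_spec.choose) : P × P)) := by
      intro b b' hbb
      obtain ⟨h1, h2, h3⟩ := (hLS2 b).choose_spec.choose_spec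
      obtain ⟨h1', h2', h3'⟩ := (hLS2 b').choose_spec.choose_spec
      have e1 : (hLS2 b).choose = (hLS2 b').choose := congrArg Prod.fst hbb
      have e2 : (hLS2 b).choose_spec.choose = (hLS2 b').choose_spec.choose :=
        congrArg Prod.snd hbb
      exact (hLS1 _ _ h1).unique ⟨h2, h3⟩ ⟨e1.symm ▸ h2', e2.symm ▸ h3'⟩
    exact Finite.of_injective _ hinj
  have hcount : ∀ p : P,
      (Nat.card P - 1) = Nat.card {b : B // S.inc p b} * (Nat.card Λ - 1) := by
    intro p
    letI := Fintype.ofFinite P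
    letI := Fintype.ofFinite B
    set L : Finset B := Finset.univ.filter (fun b => S.inc p b) with hL
    have hdisj : ∀ b ∈ L, ∀ b' ∈ L, b ≠ b' →
        Disjoint ((Finset.univ.filter (fun q => S.inc q b)).erase p)
          ((Finset.univ.filter (fun q => S.inc q b')).erase p) := by
      intro b hb b' hb' hne
      rw [Finset.disjoint_left]
      intro q hq hq'
      simp only [hL, Finset.mem_erase, Finset.mem_filter, Finset.mem_univ, true_and]
        at hq hq' hb hb'
      exact hne ((hLS1 p q (Ne.symm hq.1)).unique ⟨hb, hq.2⟩ ⟨hb', hq'.2⟩)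
    have hcov : L.biUnion (fun b => (Finset.univ.filter (fun q => S.inc q b)).erase p)
        = Finset.univ.erase p := by
      ext q
      simp only [hL, Finset.mem_biUnion, Finset.mem_erase, Finset.mem_filter,
        Finset.mem_univ, true_and, and_true]
      constructor
      · rintro ⟨b, hb, hq, hqb⟩
        exact hq
      · intro hq
        obtain ⟨b, ⟨hpb, hqb⟩, -⟩ := hLS1 p q (Ne.symm hq)
        exact ⟨b, hpb, hq, hqb⟩
    have hpiece : ∀ b ∈ L, ((Finset.univ.filter (fun q => S.inc q b)).erase p).card
        = Nat.card Λ - 1 := by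
      intro b hb
      have hpb : S.inc p b := by simpa [hL] using hb
      rw [Finset.card_erase_of_mem (by simp [hpb])]
      have hfc : (Finset.univ.filter (fun q => S.inc q b)).card
          = Nat.card {q : P // S.inc q b} := by
        rw [Nat.card_eq_fintype_card, Fintype.card_subtype]
      rw [hfc, hk b]
    have hbu := Finset.card_biUnion hdisj
    rw [hcov, Finset.card_erase_of_mem (Finset.mem_univ p), Finset.card_univ,
      Finset.sum_const_nat hpiece] at hbu
    have hfb : Nat.card {b : B // S.inc p b} = L.card := by
      rw [Nat.card_eq_fintype_card, Fintype.card_subtype, hL]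
    rw [Nat.card_eq_fintype_card, hbu, hfb]
  have hr : ∀ p : P, Nat.card {b : B // S.inc p b}
      = (Nat.card P - 1) / (Nat.card Λ - 1) := by
    intro p
    rw [hcount p, Nat.mul_div_cancel _ (by omega : 0 < Nat.card Λ - 1)]
  have hlines : ∀ z : P × Λ, Nat.card {u : P ⊕ B × Λ // M.inc u z}
      = 1 + (Nat.card P - 1) / (Nat.card Λ - 1) := by
    rintro ⟨p, m⟩
    have e : {u : P ⊕ B × Λ // M.inc u (p, m)} ≃ Option {b : B // S.inc p b} :=
      { toFun := fun x => match x with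
          | ⟨Sum.inl q, _⟩ => none
          | ⟨Sum.inr (b, l), h⟩ => some ⟨b, h.1⟩
        invFun := fun o => match o with
          | none => ⟨Sum.inl p, rfl⟩
          | some ⟨b, hb⟩ => ⟨Sum.inr (b, (φ b p)⁻¹ • m), ⟨hb, (smul_inv_smul _ _).symm⟩⟩
        left_inv := by
          rintro ⟨u | ⟨b, l⟩, h⟩
          · have hup : u = p := h
            subst hup
            rfl
          · have h2 : m = φ b p • l := h.2
            apply Subtype.ext
            simp only
            rw [h2, inv_smul_smul]
        right_inv := by
          rintro (_ | ⟨b, hb⟩) <;> rfl }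
    rw [Nat.card_congr e, Finite.card_option, hr p]
    omega
  have hpoints : ∀ u : P ⊕ B × Λ, Nat.card {z : P × Λ // M.inc u z} = Nat.card Λ := by
    rintro (p | ⟨b, l⟩)
    · exact Nat.card_congr (pencil1 p).some
    · rw [Nat.card_congr (pencil2 b l).some, hk b]
  exact ⟨hFinΛ, hv3, hk2, hlines, hpoints⟩
end

section
/- Let F be a field, and consider the affine plane over F with points F×F, vertical lines L_b = {(b,y) : y ∈ F}, and non-vertical lines L_{m,b} = {(x,mx+b) : x ∈ F}. Define a gain function φ on edges of the incidence graph, with values in the additive group (F,+), by φ({L_b,(b,y)}) = -by and φ({L_{m,b},(x,mx+b)}) = xb. Then for every line L and point p not on L, the function ρ_{L,p} from the points of L to F, given by ρ_{L,p}(q) = φ(M p) - φ(M q) + φ(L q) where M is the unique line through p and q, is injective. -/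
open Classical

section Affine

variable {F : Type*} [Field F]

/-- Incidence in the affine plane over `F`: lines are `Sum.inl b` (the vertical line
`L_b`) and `Sum.inr (m, b)` (the line `L_{m,b}` with slope `m` and `y`-intercept `b`). -/
def affInc (p : F × F) : F ⊕ F × F → Prop
  | Sum.inl b => p.1 = b
  | Sum.inr (m, b) => p.2 = m * p.1 + b

/-- The affine plane over `F` as an incidence structure. -/
def affPlane (F : Type*) [Field F] : IncStruct (F × F) (F ⊕ F × F) := ⟨fun p L => affInc p L⟩

/-- The gain function: `φ({L_b,(b,y)}) = -b*y` and `φ({L_{m,b},(x,mx+b)}) = x*b`. -/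
def affGain : F ⊕ F × F → F × F → F
  | Sum.inl b, p => -(b * p.2)
  | Sum.inr (_, b), p => p.1 * b

/-- The unique line through two distinct points of the affine plane. -/
noncomputable def lineThrough (p q : F × F) : F ⊕ F × F :=
  if p.1 = q.1 then Sum.inl p.1
  else Sum.inr ((p.2 - q.2) / (p.1 - q.1), q.2 - (p.2 - q.2) / (p.1 - q.1) * q.1)

/-- `ρ_{L,p}(q) = φ(Mp) - φ(Mq) + φ(Lq)`, where `M` is the line through `p` and `q`. -/
noncomputable def rhoAff (L : F ⊕ F × F) (p q : F × F) : F :=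
  affGain (lineThrough p q) p - affGain (lineThrough p q) q + affGain L q

end Affine

lemma rhoAff_vert {F : Type*} [Field F] (b y : F) (p : F × F) (hp : p.1 ≠ b) :
    rhoAff (Sum.inl b) p (b, y) = (p.1 - b) * y - p.2 * b := by
  rw [rhoAff, lineThrough]
  simp only [hp, if_false]
  simp only [affGain]
  have h : p.1 - b ≠ 0 := sub_ne_zero.mpr hp
  field_simp
  ring

lemma rhoAff_nonvert {F : Type*} [Field F] (m c x : F) (p : F × F) :
    rhoAff (Sum.inr (m, c)) p (x, m * x + c) = x * (m * p.1 + c - p.2) + p.1 * c := by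
  rw [rhoAff, lineThrough]
  by_cases h : p.1 = x
  · simp only [h, eq_self_iff_true, if_true, affGain]
    ring
  · simp only [h, if_false]
    simp only [affGain]
    have h' : p.1 - x ≠ 0 := sub_ne_zero.mpr h
    field_simp
    ring

/-- for the gain function `φ(L_b,(b,y)) = -by`, `φ(L_{m,b},(x,mx+b)) = xb`
on the affine plane over a field `F`, the function `ρ_{L,p}` is injective for every
line `L` and point `p` not on `L`. -/
theorem rhoAff_injective {F : Type*} [Field F] (L : F ⊕ F × F) (p : F × F)
    (hp : ¬ affInc p L) :
    Function.Injective (fun q : {q : F × F // affInc q L} => rhoAff L p q.1) := by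
  rintro ⟨⟨x1, y1⟩, hq1⟩ ⟨⟨x2, y2⟩, hq2⟩ h
  simp only at h
  cases L with
  | inl b =>
    simp only [affInc] at hq1 hq2 hp
    rw [hq1, hq2, rhoAff_vert b y1 p hp, rhoAff_vert b y2 p hp] at h
    have : (p.1 - b) * y1 = (p.1 - b) * y2 := by linear_combination h
    have hy : y1 = y2 := mul_left_cancel₀ (sub_ne_zero.mpr hp) this
    exact Subtype.ext (Prod.ext (hq1.trans hq2.symm) hy)
  | inr mc =>
    obtain ⟨m, c⟩ := mc
    simp only [affInc] at hq1 hq2 hp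
    rw [hq1, hq2, rhoAff_nonvert m c x1 p, rhoAff_nonvert m c x2 p] at h
    have hne : m * p.1 + c - p.2 ≠ 0 := by
      intro h0
      exact hp (sub_eq_zero.mp h0).symm
    have : x1 * (m * p.1 + c - p.2) = x2 * (m * p.1 + c - p.2) := by
      linear_combination h
    have hx : x1 = x2 := mul_right_cancel₀ hne this
    have hy : y1 = y2 := by rw [hq1, hq2, hx]
    exact Subtype.ext (Prod.ext hx hy)
end

section
/- Let F be a field, and consider the affine plane over F with the gain function φ with values in (F,+) given by φ({L_b,(b,y)}) = -by on vertical-line edges and φ({L_{m,b},(x,mx+b)}) = xb on non-vertical-line edges. Then for every line L and point p not on L, the function ρ_{L,p} from the points of L to F, given by ρ_{L,p}(q) = φ(M p) - φ(M q) + φ(L q) where M is the unique line through p and q, is surjective. -/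
open Classical

/-- for the gain function `φ(L_b,(b,y)) = -by`, `φ(L_{m,b},(x,mx+b)) = xb`
on the affine plane over a field `F`, the function `ρ_{L,p}` is surjective onto `F`
for every line `L` and point `p` not on `L`. -/
theorem rhoAff_surjective {F : Type*} [Field F] (L : F ⊕ F × F) (p : F × F)
    (hp : ¬ affInc p L) :
    Function.Surjective (fun q : {q : F × F // affInc q L} => rhoAff L p q.1) := by
  intro v
  obtain ⟨x, y⟩ := p
  match L with
  | Sum.inl b =>
    have hb : x ≠ b := hp
    have hb' : x - b ≠ 0 := sub_ne_zero.mpr hb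
    refine ⟨⟨(b, (v + y * b) / (x - b)), rfl⟩, ?_⟩
    simp only [rhoAff, lineThrough, if_neg hb, affGain]
    field_simp
    ring
  | Sum.inr (m, c) =>
    have hd : m * x + c - y ≠ 0 := fun h => hp (by simpa [affInc] using (sub_eq_zero.mp h).symm)
    obtain ⟨t, htv⟩ : ∃ t : F, t * (m * x + c - y) = v - x * c :=
      ⟨(v - x * c) / (m * x + c - y), div_mul_cancel₀ _ hd⟩
    refine ⟨⟨(t, m * t + c), rfl⟩, ?_⟩
    by_cases hx : x = t
    · simp only [rhoAff, lineThrough, if_pos hx, affGain]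
      rw [← hx] at htv
      linear_combination htv - (m * x + c) * hx
    · have hx' : x - t ≠ 0 := sub_ne_zero.mpr hx
      simp only [rhoAff, lineThrough, if_neg hx, affGain]
      field_simp
      linear_combination htv
end

section
/- Let (Γ,φ) be an incidence gain graph whose underlying incidence structure (P,B,I) is a linear space, with gain group acting on a nonempty set Λ. Suppose that for all pairs (b,p) with p not incident to b and all λ ∈ Λ, the map ρ_{b,p,λ} : P_b → Λ is surjective. Then for every b ∈ B, p ∈ P with p not incident to b, and λ, μ ∈ Λ, there exists a 3-chain in 𝔐(Γ,φ) from y_{b,λ} to z_{p,μ} of the form (y_{b,λ}, z_{q,λ₁}, y_{b',λ₂}, z_{p,μ}), where q is a point on b, b' is the unique line through p and q, λ₁ = φ(bq)·λ, λ₂ = φ(b'q)⁻¹·λ₁, and μ = φ(b'p)·λ₂. -/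
open Classical

/-- if every `ρ_{b,p,λ}` is surjective, then for `p` not on `b` and
`λ, μ ∈ Λ` there is a `3`-chain `(y_{b,λ}, z_{q,λ₁}, y_{b',λ₂}, z_{p,μ})` in 𝔐(Γ,φ)
with `q` on `b`, `b'` the line through `p` and `q`, `λ₁ = φ(bq)•λ`,
`λ₂ = φ(b'q)⁻¹•λ₁` and `μ = φ(b'p)•λ₂`. -/
theorem exists_three_chain_of_rho_surjective {P B G Λ : Type*} [Group G]
    [MulAction G Λ] [Nonempty Λ] (S : IncStruct P B) (φ : B → P → G)
    (hLS : S.IsLinearSpace)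
    (hsurj : ∀ (p : P) (b : B), ¬ S.inc p b → ∀ lam : Λ,
      Function.Surjective (fun q : {q : P // S.inc q b} => rho S φ b p q.1 • lam)) :
    ∀ (b : B) (p : P), ¬ S.inc p b → ∀ lam mu : Λ,
      ∃ (q : P) (b' : B) (lam₁ lam₂ : Λ),
        S.inc q b ∧ S.inc p b' ∧ S.inc q b' ∧
        lam₁ = φ b q • lam ∧ lam₂ = (φ b' q)⁻¹ • lam₁ ∧ mu = φ b' p • lam₂ ∧
        (MStruct S φ Λ).IsNChain 3 (Sum.inl (Sum.inr (b, lam))) (Sum.inr (p, mu))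
          [Sum.inl (Sum.inr (b, lam)), Sum.inr (q, lam₁),
            Sum.inl (Sum.inr (b', lam₂)), Sum.inr (p, mu)] := by
  intro b p hpb lam mu
  obtain ⟨⟨q, hqb⟩, hq⟩ := hsurj p b hpb lam mu
  have hpq : p ≠ q := fun h => hpb (h ▸ hqb)
  have hex : ∃ b' : B, S.inc p b' ∧ S.inc q b' := by
    obtain ⟨b', hb', _⟩ := hLS.1 p q hpq
    exact ⟨b', hb'⟩
  set b' := hex.choose with hb'def
  obtain ⟨hpb', hqb'⟩ := hex.choose_spec
  have hrho : rho S φ b p q = φ b' p * (φ b' q)⁻¹ * φ b q := by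
    rw [rho, dif_pos hex]
  refine ⟨q, b', φ b q • lam, (φ b' q)⁻¹ • φ b q • lam, hqb, hpb', hqb', rfl, rfl, ?_, ?_⟩
  · simp only at hq
    rw [hrho] at hq
    rw [← hq, mul_smul, mul_smul]
  · refine ⟨rfl, rfl, rfl, ?_⟩
    have hmu : mu = φ b' p • (φ b' q)⁻¹ • φ b q • lam := by
      simp only at hq
      rw [hrho] at hq
      rw [← hq, mul_smul, mul_smul]
    refine List.isChain_cons_cons.2 ⟨⟨hqb, rfl⟩, List.isChain_cons_cons.2 ⟨⟨hqb', by simp⟩,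
      List.isChain_cons_cons.2 ⟨⟨hpb', hmu⟩, List.isChain_singleton _⟩⟩⟩
end

section
/- Let F be a field, let L = L_{m,b} be a non-vertical line in the affine plane over F, and let p = (x,y) with y ≠ mx + b. For a point p₁ = (x₁, mx₁ + b) on L, the value ρ_{L,p}(p₁) of the rho function for the gain φ({L_c,(c,y)}) = -cy, φ({L_{m,c},(x,mx+c)}) = xc equals x₁(mx + b - y) + xb, regardless of whether the line through p and p₁ is vertical or not. Consequently, ρ_{L,p} : q ↦ ρ_{L,p}(q) is a bijection from the points of L onto F. -/
open Classical

/-- for a non-vertical line `L = L_{m,b}` and a point `p = (x,y)` not on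
`L`, the rho value at any point `p₁ = (x₁, m x₁ + b)` of `L` equals
`x₁(mx + b - y) + xb` (whether or not the line through `p` and `p₁` is vertical);
consequently `ρ_{L,p}` is a bijection from the points of `L` onto `F`. -/
theorem rhoAff_nonvertical_formula {F : Type*} [Field F] (m b x y : F)
    (hp : y ≠ m * x + b) :
    (∀ x₁ : F,
      rhoAff (Sum.inr (m, b)) (x, y) (x₁, m * x₁ + b) =
        x₁ * (m * x + b - y) + x * b) ∧
    Function.Bijective
      (fun q : {q : F × F // affInc q (Sum.inr (m, b))} =>
        rhoAff (Sum.inr (m, b)) (x, y) q.1) := by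
  have key : ∀ x₁ : F,
      rhoAff (Sum.inr (m, b)) (x, y) (x₁, m * x₁ + b) =
        x₁ * (m * x + b - y) + x * b := by
    intro x₁
    unfold rhoAff lineThrough affGain
    by_cases h : x = x₁
    · subst h
      simp only [if_pos rfl, reduceIte, affGain]
      ring
    · have hx : (x, y).1 ≠ ((x₁, m * x₁ + b) : F × F).1 := h
      simp only [if_neg hx, affGain]
      have hne : x - x₁ ≠ 0 := sub_ne_zero.mpr h
      field_simp
      ring
  refine ⟨key, ?_⟩
  have hne : m * x + b - y ≠ 0 := sub_ne_zero.mpr (Ne.symm hp)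
  have hform : ∀ q : {q : F × F // affInc q (Sum.inr (m, b))},
      rhoAff (Sum.inr (m, b)) (x, y) q.1 = q.1.1 * (m * x + b - y) + x * b := by
    rintro ⟨⟨a, c⟩, hq⟩
    have hc : c = m * a + b := hq
    subst hc
    exact key a
  constructor
  · rintro ⟨⟨a, c⟩, hq⟩ ⟨⟨a', c'⟩, hq'⟩ h
    beta_reduce at h
    rw [hform ⟨⟨a, c⟩, hq⟩, hform ⟨⟨a', c'⟩, hq'⟩] at h
    have ha : a = a' := mul_right_cancel₀ hne (add_right_cancel h)
    subst ha
    have hc : c = c' := by rw [show c = m * a + b from hq, show c' = m * a + b from hq']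
    subst hc; rfl
  · intro r
    refine ⟨⟨((r - x * b) / (m * x + b - y), m * ((r - x * b) / (m * x + b - y)) + b), rfl⟩, ?_⟩
    beta_reduce
    rw [hform]
    field_simp
    have hne' : x * m + b - y ≠ 0 := by rwa [mul_comm x m]
    rw [mul_div_assoc, div_self hne', mul_one]; ring
end

section
/- Let (Γ,φ) be an incidence gain graph whose underlying incidence structure (P,B,I) is a linear space, with gain group acting on a nonempty set Λ, and suppose 𝔐(Γ,φ) is a generalized quadrangle. Then for every b ∈ B, p ∈ P with p not incident to b, and λ, μ ∈ Λ, there exists a unique point q on b such that ρ_{b,p,λ}(q) = μ. -/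
open Classical

section AuxLemmas

variable {α : Type*}

/-- Along a chain of a "bipartite" relation, the side alternates, so the endpoints
are on the same side iff the length of the list is odd. -/
lemma chain_parity_aux {r : α → α → Prop} (f : α → Bool)
    (hf : ∀ x y, r x y → f x ≠ f y) :
    ∀ (c : List α), c.Chain' r → ∀ u v, c.head? = some u → c.getLast? = some v →
      (f u = f v ↔ Odd c.length) := by
  intro c
  induction c with
  | nil => intro _ u v h; simp at h
  | cons a t ih =>
    intro hch u v hu hv
    have hu' : a = u := by simpa using hu
    subst hu'
    cases t with
    | nil =>
      have hv' : a = v := by simpa using hv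
      subst hv'
      simp
    | cons b t' =>
      have hr : r a b := (List.isChain_cons_cons.mp hch).1
      have hch' : (b :: t').Chain' r := (List.isChain_cons_cons.mp hch).2
      have hv' : (b :: t').getLast? = some v := by
        rw [← hv]; simp
      have hih := ih hch' b v rfl hv'
      have hne : f a ≠ f b := hf a b hr
      have hlen : (a :: b :: t').length = (b :: t').length + 1 := by simp
      rw [hlen]
      constructor
      · intro hav
        have hbv : f b ≠ f v := fun h => hne (hav.trans h.symm)
        have hno : ¬ Odd (b :: t').length := fun h => hbv (hih.mpr h)
        simpa [Nat.odd_add_one] using hno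
      · intro hodd
        have hno : ¬ Odd (b :: t').length := by
          rcases hodd with ⟨m, hm⟩
          rintro ⟨m', hm'⟩
          omega
        have hbv : f b ≠ f v := fun h => hno (hih.mp h)
        cases hfa : f a <;> cases hfb : f b <;> cases hfv : f v <;> simp_all

/-- If the distance is finite, it is attained as the minimal chain length. -/
lemma dist_attained {P B : Type*} (S : IncStruct P B) (u v : P ⊕ B)
    (h : S.dist u v ≠ ⊤) :
    ∃ k : ℕ, S.dist u v = (k : ℕ∞) ∧ (∃ c, S.IsNChain k u v c) ∧
      ∀ k' : ℕ, (∃ c, S.IsNChain k' u v c) → k ≤ k' := by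
  set T : Set ℕ := {k : ℕ | ∃ c, S.IsNChain k u v c} with hT
  have hTne : T.Nonempty := by
    by_contra hemp
    have : {n : ℕ∞ | ∃ (k : ℕ) (c : List (P ⊕ B)), n = (k : ℕ∞) ∧ S.IsNChain k u v c} = ∅ := by
      ext n
      simp only [Set.mem_setOf_eq, Set.mem_empty_iff_false, iff_false]
      rintro ⟨k, c, rfl, hc⟩
      exact hemp ⟨k, c, hc⟩
    have : S.dist u v = ⊤ := by rw [IncStruct.dist, this, sInf_empty]
    exact h this
  obtain ⟨c0, hc0⟩ := Nat.sInf_mem hTne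
  refine ⟨sInf T, ?_, ⟨c0, hc0⟩, fun k' hk' => Nat.sInf_le hk'⟩
  apply le_antisymm
  · exact sInf_le ⟨sInf T, c0, rfl, hc0⟩
  · apply le_sInf
    rintro n ⟨k, c, rfl, hc⟩
    have hkT : k ∈ T := ⟨c, hc⟩
    exact_mod_cast Nat.sInf_le hkT

/-- Evaluation of `rho` when an explicit common line of `p` and `q` is known. -/
lemma rho_eval {P B G : Type*} [Group G] (S : IncStruct P B) (φ : B → P → G)
    (hLS : S.IsLinearSpace) {b b' : B} {p q : P} (hpq : p ≠ q)
    (hp : S.inc p b') (hq : S.inc q b') :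
    rho S φ b p q = φ b' p * (φ b' q)⁻¹ * φ b q := by
  have h : ∃ b'' : B, S.inc p b'' ∧ S.inc q b'' := ⟨b', hp, hq⟩
  rw [rho, dif_pos h]
  obtain ⟨bu, _, huniq⟩ := hLS.1 p q hpq
  have h1 : h.choose = bu := huniq _ h.choose_spec
  have h2 : b' = bu := huniq _ ⟨hp, hq⟩
  rw [h1, ← h2]

end AuxLemmas

/-- if 𝔐(Γ,φ) is a generalized quadrangle, then for `p` not on `b` and
any `λ, μ ∈ Λ` there is a unique point `q` on `b` with `ρ_{b,p,λ}(q) = μ`. -/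
theorem existsUnique_rho_point_of_isGQ {P B G Λ : Type*} [Group G] [MulAction G Λ]
    [Nonempty Λ] (S : IncStruct P B) (φ : B → P → G) (hLS : S.IsLinearSpace)
    (hGQ : (MStruct S φ Λ).IsGQ) :
    ∀ (b : B) (p : P), ¬ S.inc p b → ∀ lam mu : Λ,
      ∃! q : {q : P // S.inc q b}, rho S φ b p q.1 • lam = mu := by
  intro b p hnb lam mu
  set M := MStruct S φ Λ with hM
  set u : (P ⊕ B × Λ) ⊕ P × Λ := Sum.inl (Sum.inr (b, lam)) with hu
  set v : (P ⊕ B × Λ) ⊕ P × Λ := Sum.inr (p, mu) with hv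
  -- The `side` function on the bipartite incidence graph of M.
  have hfadj : ∀ x y : (P ⊕ B × Λ) ⊕ P × Λ, M.adj x y →
      (Sum.elim (fun _ => false) (fun _ => true) : ((P ⊕ B × Λ) ⊕ P × Λ) → Bool) x ≠
        Sum.elim (fun _ => false) (fun _ => true) y := by
    rintro (x | x) (y | y) hxy <;> simp [IncStruct.adj] at hxy ⊢
  -- The distance from u to v is finite, hence attained.
  have h4 : M.dist u v ≤ 4 := hGQ.1 u v
  have hnt : M.dist u v ≠ ⊤ := by
    intro h
    rw [h, top_le_iff] at h4
    exact absurd h4.symm (by simp)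
  obtain ⟨k, hk, ⟨c0, hc0⟩, -⟩ := dist_attained M u v hnt
  have hk4 : k ≤ 4 := by
    rw [hk] at h4
    exact_mod_cast h4
  -- The length k is odd by bipartiteness.
  have hkodd : Odd k := by
    obtain ⟨hlen, hhead, hlast, hchain⟩ := hc0
    have hpar := chain_parity_aux _ hfadj c0 hchain u v hhead hlast
    rw [hlen] at hpar
    have hfuv : (Sum.elim (fun _ => false) (fun _ => true) : ((P ⊕ B × Λ) ⊕ P × Λ) → Bool) u ≠
        Sum.elim (fun _ => false) (fun _ => true) v := by simp [hu, hv]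
    have hno : ¬ Odd (k + 1) := fun h => hfuv (hpar.mpr h)
    rw [Nat.odd_add_one, not_not] at hno
    exact hno
  -- k ≠ 1.
  have hk1 : k ≠ 1 := by
    rintro rfl
    obtain ⟨hlen, hhead, hlast, hchain⟩ := hc0
    rcases c0 with _ | ⟨a0, c0⟩
    · simp at hlen
    rcases c0 with _ | ⟨a1, c0⟩
    · simp at hlen
    rcases c0 with _ | ⟨a2, c0⟩
    swap
    · simp only [List.length_cons] at hlen; omega
    have ha0 : a0 = u := by simpa using hhead
    have ha1 : a1 = v := by simpa using hlast
    subst ha0 ha1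
    have hadj : M.adj u v := (List.isChain_cons_cons.mp hchain).1
    have : S.inc p b ∧ mu = φ b p • lam := hadj
    exact hnb this.1
  have hk3 : k = 3 := by
    rcases hkodd with ⟨m, hm⟩
    omega
  rw [hk3] at hk
  -- The unique 3-chain from u to v.
  obtain ⟨c, hc, hcuniq⟩ := hGQ.2 u v 3 (by norm_num) hk
  -- Any admissible q yields a 3-chain whose second entry records q.
  have key : ∀ q : P, S.inc q b → rho S φ b p q • lam = mu →
      ∃ w : (P ⊕ B × Λ) ⊕ P × Λ,
        M.IsNChain 3 u v [u, Sum.inr (q, φ b q • lam), w, v] := by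
    intro q hq hrho
    have hpq : p ≠ q := fun h => hnb (h ▸ hq)
    obtain ⟨b', ⟨hpb', hqb'⟩, -⟩ := hLS.1 p q hpq
    have hrhoval : rho S φ b p q = φ b' p * (φ b' q)⁻¹ * φ b q :=
      rho_eval S φ hLS hpq hpb' hqb'
    set w : (P ⊕ B × Λ) ⊕ P × Λ := Sum.inl (Sum.inr (b', (φ b' q)⁻¹ • (φ b q • lam))) with hw
    have had1 : M.adj u (Sum.inr (q, φ b q • lam)) := ⟨hq, rfl⟩
    have had2 : M.adj (Sum.inr (q, φ b q • lam)) w :=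
      ⟨hqb', (smul_inv_smul _ _).symm⟩
    have had3 : M.adj w v := by
      refine ⟨hpb', ?_⟩
      rw [← hrho, hrhoval, mul_smul, mul_smul]
    have hch : List.Chain' M.adj [u, Sum.inr (q, φ b q • lam), w, v] :=
      List.isChain_cons_cons.mpr ⟨had1, List.isChain_cons_cons.mpr ⟨had2,
        List.isChain_cons_cons.mpr ⟨had3, List.isChain_singleton _⟩⟩⟩
    exact ⟨w, rfl, rfl, rfl, hch⟩
  -- Decompose the unique 3-chain to extract the point q₀.
  obtain ⟨hlen, hhead, hlast, hchain⟩ := hc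
  rcases c with _ | ⟨a0, c⟩
  · simp at hlen
  rcases c with _ | ⟨a1, c⟩
  · simp at hlen
  rcases c with _ | ⟨a2, c⟩
  · simp at hlen
  rcases c with _ | ⟨a3, c⟩
  · simp at hlen
  rcases c with _ | ⟨a4, c⟩
  swap
  · simp only [List.length_cons] at hlen; omega
  have ha0 : a0 = u := by simpa using hhead
  have ha3 : a3 = v := by simpa using hlast
  subst ha0 ha3
  have h01 : M.adj u a1 := (List.isChain_cons_cons.mp hchain).1
  have h12 : M.adj a1 a2 := (List.isChain_cons_cons.mp (List.isChain_cons_cons.mp hchain).2).1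
  have h23 : M.adj a2 v :=
    (List.isChain_cons_cons.mp (List.isChain_cons_cons.mp (List.isChain_cons_cons.mp hchain).2).2).1
  rcases a1 with x1 | ⟨q0, m1⟩
  · exact ((h01 : False)).elim
  have h01' : S.inc q0 b ∧ m1 = φ b q0 • lam := h01
  obtain ⟨hq0b, hm1⟩ := h01'
  rcases a2 with x2 | z2
  swap
  · exact ((h12 : False)).elim
  rcases x2 with r | ⟨b', l⟩
  · -- x₂ = x_r : then r = q0 and r = p, impossible.
    have h1 : r = q0 := h12
    have h2 : r = p := h23
    exact absurd (show S.inc p b by rw [← h2, h1]; exact hq0b) hnb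
  have h12' : S.inc q0 b' ∧ m1 = φ b' q0 • l := h12
  have h23' : S.inc p b' ∧ mu = φ b' p • l := h23
  obtain ⟨hq0b', hm1'⟩ := h12'
  obtain ⟨hpb', hmu⟩ := h23'
  have hpq0 : p ≠ q0 := fun h => hnb (h ▸ hq0b)
  have hrho0 : rho S φ b p q0 • lam = mu := by
    rw [rho_eval S φ hLS hpq0 hpb' hq0b', hmu, mul_smul, mul_smul]
    congr 1
    rw [← hm1, hm1', inv_smul_smul]
  refine ⟨⟨q0, hq0b⟩, hrho0, ?_⟩
  rintro ⟨q', hq'⟩ hrho'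
  obtain ⟨w, hw⟩ := key q' hq' hrho'
  have heq := hcuniq _ hw
  simp only [List.cons.injEq] at heq
  have h2 : (Sum.inr (q', φ b q' • lam) : (P ⊕ B × Λ) ⊕ P × Λ) = Sum.inr (q0, m1) :=
    heq.2.1
  simp only [Sum.inr.injEq, Prod.mk.injEq] at h2
  exact Subtype.ext h2.1
end
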